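/- (Lemma 4.) Fix γ ≥ 0 with B + γC invertible and suppose λ > 0 is such that ‖I − μ_j Ψ A‖₂ ≤ 1 − μ_j λ and 0 < μ_j λ ≤ 1 for every j ≥ 1. Then for every k ≥ 1, ‖E[e^k (e^k)ᵀ]‖_F ≤ ((1 − μ_k λ)² + μ_k² σ_ΩΩ² d²) ‖E[e^{k−1} (e^{k−1})ᵀ]‖_F + μ_k² d² (σ_θθ² + 2 σ_Ωθ² ‖û‖ + σ_ΩΩ² ‖û‖²) + 2 μ_k² d² (σ_ΩΩ² ‖û‖ + σ_Ωθ²) ‖E[e^0]‖. -/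

import Mathlib

open MeasureTheory ProbabilityTheory Matrix Filter

/-- Measurable-space structure on matrices (entrywise). -/
instance matrixMeasurableSpace {m n α : Type*} [MeasurableSpace α] :
    MeasurableSpace (Matrix m n α) := MeasurableSpace.pi (X := fun _ : m => n → α)

/-- The Euclidean norm of a vector. -/
noncomputable def euclNorm {ι : Type*} [Fintype ι] (v : ι → ℝ) : ℝ :=
  Real.sqrt (∑ i, (v i) ^ 2)

/-- The Frobenius norm of a matrix. -/
noncomputable def frobNorm {ι κ : Type*} [Fintype ι] [Fintype κ] (F : Matrix ι κ ℝ) : ℝ :=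
  Real.sqrt (∑ i, ∑ j, (F i j) ^ 2)

/-- Entrywise expectation of a random vector. -/
noncomputable def Evec {Ω' : Type*} [MeasurableSpace Ω'] (P : Measure Ω') {ι : Type*}
    (F : Ω' → ι → ℝ) : ι → ℝ := fun i => ∫ ω, F ω i ∂P

/-- Entrywise expectation of a random matrix. -/
noncomputable def Emat {Ω' : Type*} [MeasurableSpace Ω'] (P : Measure Ω') {ι κ : Type*}
    (F : Ω' → Matrix ι κ ℝ) : Matrix ι κ ℝ := Matrix.of fun i j => ∫ ω, F ω i j ∂P

/-- Entrywise integrability of a random vector. -/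
def IntV {Ω' : Type*} [MeasurableSpace Ω'] (P : Measure Ω') {ι : Type*}
    (F : Ω' → ι → ℝ) : Prop := ∀ i, Integrable (fun ω => F ω i) P

/-- Entrywise integrability of a random matrix. -/
def IntM {Ω' : Type*} [MeasurableSpace Ω'] (P : Measure Ω') {ι κ : Type*}
    (F : Ω' → Matrix ι κ ℝ) : Prop := ∀ i j, Integrable (fun ω => F ω i j) P

/-- `vec(P) vec(Q)ᵀ`, with `vec` stacking the columns of a square matrix. -/
def vecOuter {M : ℕ} (P Q : Matrix (Fin M) (Fin M) ℝ) :
    Matrix (Fin M × Fin M) (Fin M × Fin M) ℝ :=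
  Matrix.of fun p q => P p.1 p.2 * Q q.1 q.2

/-- `vec(P) vᵀ` for a square matrix `P` and a vector `v`. -/
def vecOuterVec {M : ℕ} (P : Matrix (Fin M) (Fin M) ℝ) (v : Fin M → ℝ) :
    Matrix (Fin M × Fin M) (Fin M) ℝ :=
  Matrix.of fun p i => P p.1 p.2 * v i

/-- The matrix norm induced by the Euclidean (ℓ²) vector norm. -/
noncomputable def l2OpNorm {n : ℕ} (P : Matrix (Fin n) (Fin n) ℝ) : ℝ :=
  ‖(Matrix.toEuclideanCLM (𝕜 := ℝ) P)‖

namespace L4Aux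

variable {ι κ τ : Type*} [Fintype ι] [Fintype κ] [Fintype τ]

lemma sqrt_contraction {α β : Type*} [Fintype α] [Fintype β]
    (K : α → β → ℝ) (x : β → ℝ) :
    Real.sqrt (∑ a, (∑ b, K a b * x b) ^ 2) ≤
      Real.sqrt (∑ a, ∑ b, (K a b) ^ 2) * Real.sqrt (∑ b, (x b) ^ 2) := by
  rw [← Real.sqrt_mul (by positivity)]
  apply Real.sqrt_le_sqrt
  rw [Finset.sum_mul]
  exact Finset.sum_le_sum fun a _ => Finset.sum_mul_sq_le_sq_mul_sq _ _ _

lemma euclNorm_nonneg (v : ι → ℝ) : 0 ≤ euclNorm v := Real.sqrt_nonneg _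

lemma euclNorm_eq (v : ι → ℝ) :
    euclNorm v = ‖((WithLp.equiv 2 (ι → ℝ)).symm v : EuclideanSpace ℝ ι)‖ := by
  rw [EuclideanSpace.norm_eq]
  unfold euclNorm
  congr 1
  refine Finset.sum_congr rfl fun i _ => ?_
  rw [WithLp.equiv_symm_apply, WithLp.ofLp_toLp, Real.norm_eq_abs, sq_abs]

lemma frobNorm_nonneg (F : Matrix ι κ ℝ) : 0 ≤ frobNorm F := Real.sqrt_nonneg _

lemma frobNorm_eq_eucl (F : Matrix ι κ ℝ) :
    frobNorm F = euclNorm (fun p : ι × κ => F p.1 p.2) := by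
  unfold frobNorm euclNorm
  rw [Fintype.sum_prod_type]

lemma frobNorm_transpose (F : Matrix ι κ ℝ) : frobNorm Fᵀ = frobNorm F := by
  unfold frobNorm
  rw [Finset.sum_comm]
  rfl

lemma euclNorm_add_le (x y : ι → ℝ) : euclNorm (x + y) ≤ euclNorm x + euclNorm y := by
  rw [euclNorm_eq, euclNorm_eq, euclNorm_eq]
  have : ((WithLp.equiv 2 (ι → ℝ)).symm (x + y) : EuclideanSpace ℝ ι)
      = (WithLp.equiv 2 (ι → ℝ)).symm x + (WithLp.equiv 2 (ι → ℝ)).symm y := rfl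
  rw [this]
  exact norm_add_le _ _

lemma frobNorm_add_le (X Y : Matrix ι κ ℝ) :
    frobNorm (X + Y) ≤ frobNorm X + frobNorm Y := by
  rw [frobNorm_eq_eucl, frobNorm_eq_eucl, frobNorm_eq_eucl]
  exact euclNorm_add_le _ _

lemma frobNorm_neg (X : Matrix ι κ ℝ) : frobNorm (-X) = frobNorm X := by
  unfold frobNorm; simp

lemma frobNorm_sub_le (X Y : Matrix ι κ ℝ) :
    frobNorm (X - Y) ≤ frobNorm X + frobNorm Y := by
  rw [sub_eq_add_neg]
  refine (frobNorm_add_le _ _).trans ?_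
  rw [frobNorm_neg]

lemma frobNorm_smul (c : ℝ) (X : Matrix ι κ ℝ) : frobNorm (c • X) = |c| * frobNorm X := by
  unfold frobNorm
  rw [← Real.sqrt_sq_eq_abs, ← Real.sqrt_mul (by positivity)]
  congr 1
  simp [Finset.mul_sum, Matrix.smul_apply, mul_pow]

lemma frobNorm_sq (F : Matrix ι κ ℝ) : frobNorm F ^ 2 = ∑ i, ∑ j, (F i j) ^ 2 :=
  Real.sq_sqrt (by positivity)

lemma frobNorm_mul_le (P : Matrix ι κ ℝ) (Q : Matrix κ τ ℝ) :
    frobNorm (P * Q) ≤ frobNorm P * frobNorm Q := by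
  unfold frobNorm
  rw [← Real.sqrt_mul (by positivity)]
  apply Real.sqrt_le_sqrt
  calc ∑ i, ∑ j, ((P * Q) i j) ^ 2
      ≤ ∑ i, ∑ j, (∑ a, (P i a) ^ 2) * (∑ a, (Q a j) ^ 2) := by
        refine Finset.sum_le_sum fun i _ => Finset.sum_le_sum fun j _ => ?_
        rw [Matrix.mul_apply]
        exact Finset.sum_mul_sq_le_sq_mul_sq _ _ _
    _ = (∑ i, ∑ a, (P i a) ^ 2) * (∑ j, ∑ a, (Q a j) ^ 2) := by
        rw [← Finset.sum_mul_sum]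
    _ = (∑ i, ∑ a, (P i a) ^ 2) * (∑ a, ∑ j, (Q a j) ^ 2) := by
        congr 1
        exact Finset.sum_comm ..

lemma l2OpNorm_nonneg {n : ℕ} (T : Matrix (Fin n) (Fin n) ℝ) : 0 ≤ l2OpNorm T :=
  norm_nonneg _

lemma euclNorm_mulVec_le {n : ℕ} (T : Matrix (Fin n) (Fin n) ℝ) (x : Fin n → ℝ) :
    euclNorm (T.mulVec x) ≤ l2OpNorm T * euclNorm x := by
  rw [euclNorm_eq, euclNorm_eq]
  have h := (Matrix.toEuclideanCLM (𝕜 := ℝ) T).le_opNorm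
    ((WithLp.equiv 2 (Fin n → ℝ)).symm x)
  change ‖(WithLp.equiv 2 (Fin n → ℝ)).symm (Matrix.toLin' T x)‖ ≤ _ at h
  rw [Matrix.toLin'_apply] at h
  exact h

lemma frobNorm_op_mul_le {n : ℕ} {κ : Type*} [Fintype κ]
    (T : Matrix (Fin n) (Fin n) ℝ) (X : Matrix (Fin n) κ ℝ) :
    frobNorm (T * X) ≤ l2OpNorm T * frobNorm X := by
  have key : ∀ (Y : Matrix (Fin n) κ ℝ), frobNorm Y ^ 2 = ∑ j, euclNorm (fun i => Y i j) ^ 2 := by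
    intro Y
    rw [frobNorm_sq]
    rw [Finset.sum_comm]
    refine Finset.sum_congr rfl fun j _ => ?_
    rw [show (euclNorm fun i => Y i j) ^ 2 = ∑ i, (Y i j) ^ 2 from
      Real.sq_sqrt (by positivity)]
  have h1 : frobNorm (T * X) ^ 2 ≤ (l2OpNorm T * frobNorm X) ^ 2 := by
    rw [key, mul_pow, key]
    rw [Finset.mul_sum]
    refine Finset.sum_le_sum fun j _ => ?_
    have hcol : (fun i => (T * X) i j) = T.mulVec (fun a => X a j) := by
      funext i
      rw [Matrix.mul_apply, Matrix.mulVec, dotProduct]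
    rw [hcol, ← mul_pow]
    have := euclNorm_mulVec_le T (fun a => X a j)
    exact pow_le_pow_left₀ (euclNorm_nonneg _) this 2
  have h2 : 0 ≤ l2OpNorm T * frobNorm X :=
    mul_nonneg (l2OpNorm_nonneg _) (frobNorm_nonneg _)
  nlinarith [frobNorm_nonneg (T * X)]

lemma frobNorm_sandwich_op {n : ℕ} (T : Matrix (Fin n) (Fin n) ℝ) (X : Matrix (Fin n) (Fin n) ℝ) :
    frobNorm (T * X * Tᵀ) ≤ l2OpNorm T ^ 2 * frobNorm X := by
  have h1 : frobNorm (T * X * Tᵀ) ≤ l2OpNorm T * frobNorm (X * Tᵀ) := by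
    rw [Matrix.mul_assoc]
    exact frobNorm_op_mul_le _ _
  have h2 : frobNorm (X * Tᵀ) = frobNorm (T * Xᵀ) := by
    rw [← frobNorm_transpose (X * Tᵀ), Matrix.transpose_mul, Matrix.transpose_transpose]
  have h3 : frobNorm (T * Xᵀ) ≤ l2OpNorm T * frobNorm X := by
    refine (frobNorm_op_mul_le _ _).trans ?_
    rw [frobNorm_transpose]
  calc frobNorm (T * X * Tᵀ) ≤ l2OpNorm T * frobNorm (X * Tᵀ) := h1
    _ = l2OpNorm T * frobNorm (T * Xᵀ) := by rw [h2]
    _ ≤ l2OpNorm T * (l2OpNorm T * frobNorm X) :=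
        mul_le_mul_of_nonneg_left h3 (l2OpNorm_nonneg _)
    _ = l2OpNorm T ^ 2 * frobNorm X := by ring

lemma frobNorm_sandwich_frob {n : ℕ} (Ψ : Matrix (Fin n) (Fin n) ℝ)
    (X : Matrix (Fin n) (Fin n) ℝ) :
    frobNorm (Ψ * X * Ψᵀ) ≤ frobNorm Ψ ^ 2 * frobNorm X := by
  calc frobNorm (Ψ * X * Ψᵀ) ≤ frobNorm (Ψ * X) * frobNorm Ψᵀ := frobNorm_mul_le _ _
    _ ≤ frobNorm Ψ * frobNorm X * frobNorm Ψᵀ :=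
        mul_le_mul_of_nonneg_right (frobNorm_mul_le _ _) (frobNorm_nonneg _)
    _ = frobNorm Ψ ^ 2 * frobNorm X := by rw [frobNorm_transpose]; ring

section Integrals

variable {Ω' : Type} [MeasurableSpace Ω'] {P : Measure Ω'}

lemma integrable_sum_mul_sum {α β : Type*} [Fintype α] [Fintype β]
    (c : α → ℝ) (d : β → ℝ) (X : α → Ω' → ℝ) (Y : β → Ω' → ℝ)
    (h : ∀ a b, Integrable (fun ω => X a ω * Y b ω) P) :
    Integrable (fun ω => (∑ a, c a * X a ω) * (∑ b, d b * Y b ω)) P := by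
  have hpt : ∀ ω, (∑ a, c a * X a ω) * (∑ b, d b * Y b ω)
      = ∑ a, ∑ b, (c a * d b) * (X a ω * Y b ω) := by
    intro ω
    rw [Finset.sum_mul_sum]
    exact Finset.sum_congr rfl fun a _ => Finset.sum_congr rfl fun b _ => by ring
  rw [show (fun ω => (∑ a, c a * X a ω) * (∑ b, d b * Y b ω))
      = fun ω => ∑ a, ∑ b, (c a * d b) * (X a ω * Y b ω) from funext hpt]
  exact integrable_finset_sum _ fun a _ =>
    integrable_finset_sum _ fun b _ => (h a b).const_mul _

lemma integral_sum_mul_sum {α β : Type*} [Fintype α] [Fintype β]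
    (c : α → ℝ) (d : β → ℝ) (X : α → Ω' → ℝ) (Y : β → Ω' → ℝ)
    (h : ∀ a b, Integrable (fun ω => X a ω * Y b ω) P) :
    ∫ ω, (∑ a, c a * X a ω) * (∑ b, d b * Y b ω) ∂P
      = ∑ a, ∑ b, (c a * d b) * ∫ ω, X a ω * Y b ω ∂P := by
  have hpt : ∀ ω, (∑ a, c a * X a ω) * (∑ b, d b * Y b ω)
      = ∑ a, ∑ b, (c a * d b) * (X a ω * Y b ω) := by
    intro ω
    rw [Finset.sum_mul_sum]
    exact Finset.sum_congr rfl fun a _ => Finset.sum_congr rfl fun b _ => by ring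
  rw [show (fun ω => (∑ a, c a * X a ω) * (∑ b, d b * Y b ω))
      = fun ω => ∑ a, ∑ b, (c a * d b) * (X a ω * Y b ω) from funext hpt]
  rw [integral_finset_sum _ fun a _ =>
    integrable_finset_sum _ fun b _ => (h a b).const_mul _]
  refine Finset.sum_congr rfl fun a _ => ?_
  rw [integral_finset_sum _ fun b _ => (h a b).const_mul _]
  exact Finset.sum_congr rfl fun b _ => integral_const_mul _ _

lemma integral_lincomb {α : Type*} [Fintype α]
    (c : α → ℝ) (X : α → Ω' → ℝ) (h : ∀ a, Integrable (X a) P) :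
    ∫ ω, (∑ a, c a * X a ω) ∂P = ∑ a, c a * ∫ ω, X a ω ∂P := by
  rw [integral_finset_sum _ fun a _ => (h a).const_mul _]
  exact Finset.sum_congr rfl fun a _ => integral_const_mul _ _

end Integrals

end L4Aux

namespace L4Aux2
open L4Aux

lemma sandwich_entry {n : ℕ} (Ψ G : Matrix (Fin n) (Fin n) ℝ) (i j : Fin n) :
    (Ψ * G * Ψᵀ) i j = ∑ a, ∑ b, (Ψ i a * Ψ j b) * G a b := by
  calc (Ψ * G * Ψᵀ) i j = ∑ b, (∑ a, Ψ i a * G a b) * Ψ j b := by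
        simp [Matrix.mul_apply, Matrix.transpose_apply]
    _ = ∑ b, ∑ a, (Ψ i a * Ψ j b) * G a b := by
        refine Finset.sum_congr rfl fun b _ => ?_
        rw [Finset.sum_mul]
        exact Finset.sum_congr rfl fun a _ => by ring
    _ = ∑ a, ∑ b, (Ψ i a * Ψ j b) * G a b := Finset.sum_comm ..

lemma sum_pair_reorder {α β γ δ : Type*} [Fintype α] [Fintype β] [Fintype γ] [Fintype δ]
    (F : α × β → γ × δ → ℝ) :
    ∑ p, ∑ q, F p q = ∑ a, ∑ b, ∑ l, ∑ m, F (a, l) (b, m) := by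
  rw [Fintype.sum_prod_type]
  refine Finset.sum_congr rfl fun a _ => ?_
  calc ∑ l, ∑ q : γ × δ, F (a, l) q = ∑ l, ∑ b, ∑ m, F (a, l) (b, m) :=
        Finset.sum_congr rfl fun l _ => by rw [Fintype.sum_prod_type]
    _ = ∑ b, ∑ l, ∑ m, F (a, l) (b, m) := Finset.sum_comm ..

lemma block_ss {n : ℕ} (Ψ G : Matrix (Fin n) (Fin n) ℝ) (i j : Fin n)
    (cf df : Fin n → ℝ) (V : Fin n → Fin n → ℝ) (s₁ s₂ : ℝ)
    (hc : ∀ a, cf a = s₁ * Ψ i a) (hd : ∀ b, df b = s₂ * Ψ j b)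
    (hG : ∀ a b, G a b = V a b) :
    ∑ a, ∑ b, (cf a * df b) * V a b = (s₁ * s₂) * ((Ψ * G * Ψᵀ) i j) := by
  rw [sandwich_entry]
  simp only [Finset.mul_sum]
  refine Finset.sum_congr rfl fun a _ => Finset.sum_congr rfl fun b _ => ?_
  rw [hc, hd, hG]; ring

lemma block_sp {n : ℕ} (Ψ G : Matrix (Fin n) (Fin n) ℝ) (i j : Fin n)
    (cf : Fin n → ℝ) (df : Fin n × Fin n → ℝ) (V : Fin n → Fin n × Fin n → ℝ)
    (s₁ s₂ : ℝ) (b2 : Fin n → ℝ)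
    (hc : ∀ a, cf a = s₁ * Ψ i a) (hd : ∀ q, df q = s₂ * Ψ j q.1 * b2 q.2)
    (hG : ∀ a b, G a b = ∑ m, b2 m * V a (b, m)) :
    ∑ a, ∑ q : Fin n × Fin n, (cf a * df q) * V a q
      = (s₁ * s₂) * ((Ψ * G * Ψᵀ) i j) := by
  rw [sandwich_entry]
  simp only [Finset.mul_sum]
  refine Finset.sum_congr rfl fun a _ => ?_
  rw [Fintype.sum_prod_type]
  refine Finset.sum_congr rfl fun b _ => ?_
  rw [hG]
  simp only [Finset.mul_sum]
  refine Finset.sum_congr rfl fun m _ => ?_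
  rw [hc, hd]; ring

lemma block_ps {n : ℕ} (Ψ G : Matrix (Fin n) (Fin n) ℝ) (i j : Fin n)
    (cf : Fin n × Fin n → ℝ) (df : Fin n → ℝ) (V : Fin n × Fin n → Fin n → ℝ)
    (s₁ s₂ : ℝ) (a2 : Fin n → ℝ)
    (hc : ∀ p, cf p = s₁ * Ψ i p.1 * a2 p.2) (hd : ∀ b, df b = s₂ * Ψ j b)
    (hG : ∀ a b, G a b = ∑ l, a2 l * V (a, l) b) :
    ∑ p : Fin n × Fin n, ∑ b, (cf p * df b) * V p b
      = (s₁ * s₂) * ((Ψ * G * Ψᵀ) i j) := by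
  rw [sandwich_entry, Fintype.sum_prod_type]
  simp only [Finset.mul_sum]
  refine Finset.sum_congr rfl fun a _ => ?_
  rw [Finset.sum_comm]
  refine Finset.sum_congr rfl fun b _ => ?_
  rw [hG]
  simp only [Finset.mul_sum]
  refine Finset.sum_congr rfl fun l _ => ?_
  rw [hc, hd]; ring

lemma block_pp {n : ℕ} (Ψ G : Matrix (Fin n) (Fin n) ℝ) (i j : Fin n)
    (cf df : Fin n × Fin n → ℝ) (V : Fin n × Fin n → Fin n × Fin n → ℝ)
    (s₁ s₂ : ℝ) (a2 b2 : Fin n → ℝ)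
    (hc : ∀ p, cf p = s₁ * Ψ i p.1 * a2 p.2) (hd : ∀ q, df q = s₂ * Ψ j q.1 * b2 q.2)
    (hG : ∀ a b, G a b = ∑ l, ∑ m, (a2 l * b2 m) * V (a, l) (b, m)) :
    ∑ p : Fin n × Fin n, ∑ q : Fin n × Fin n, (cf p * df q) * V p q
      = (s₁ * s₂) * ((Ψ * G * Ψᵀ) i j) := by
  rw [sum_pair_reorder, sandwich_entry]
  simp only [Finset.mul_sum]
  refine Finset.sum_congr rfl fun a _ => Finset.sum_congr rfl fun b _ => ?_
  rw [hG]
  simp only [Finset.mul_sum]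
  refine Finset.sum_congr rfl fun l _ => Finset.sum_congr rfl fun m _ => ?_
  rw [hc, hd]; ring

lemma smul_mulVec_entry {n : ℕ} (c : ℝ) (Ψ : Matrix (Fin n) (Fin n) ℝ) (x : Fin n → ℝ)
    (i : Fin n) : (c • (Ψ *ᵥ x)) i = ∑ a, (c * Ψ i a) * x a := by
  simp [Matrix.mulVec, dotProduct, Finset.mul_sum, mul_assoc]

lemma smul_mulMul_entry {n : ℕ} (c : ℝ) (Ψ Wm : Matrix (Fin n) (Fin n) ℝ) (x : Fin n → ℝ)
    (i : Fin n) :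
    (c • ((Ψ * Wm) *ᵥ x)) i = ∑ p : Fin n × Fin n, (c * Ψ i p.1) * (Wm p.1 p.2 * x p.2) := by
  rw [Fintype.sum_prod_type]
  simp only [Pi.smul_apply, smul_eq_mul, Matrix.mulVec, dotProduct, Matrix.mul_apply,
    Finset.sum_mul, Finset.mul_sum]
  rw [Finset.sum_comm]
  exact Finset.sum_congr rfl fun a _ => Finset.sum_congr rfl fun l _ => by ring

lemma smul_mulMul_entry' {n : ℕ} (c : ℝ) (Ψ Wm : Matrix (Fin n) (Fin n) ℝ) (u : Fin n → ℝ)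
    (i : Fin n) :
    (c • ((Ψ * Wm) *ᵥ u)) i = ∑ p : Fin n × Fin n, (c * Ψ i p.1 * u p.2) * (Wm p.1 p.2) := by
  rw [Fintype.sum_prod_type]
  simp only [Pi.smul_apply, smul_eq_mul, Matrix.mulVec, dotProduct, Matrix.mul_apply,
    Finset.sum_mul, Finset.mul_sum]
  rw [Finset.sum_comm]
  exact Finset.sum_congr rfl fun a _ => Finset.sum_congr rfl fun l _ => by ring

lemma mulVec_entry {n : ℕ} (T : Matrix (Fin n) (Fin n) ℝ) (x : Fin n → ℝ) (i : Fin n) :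
    (T *ᵥ x) i = ∑ l, T i l * x l := by
  simp [Matrix.mulVec, dotProduct]

lemma sum3_swap23 {α β γ : Type*} [Fintype α] [Fintype β] [Fintype γ] (F : α → β → γ → ℝ) :
    ∑ a, ∑ b, ∑ c, F a b c = ∑ a, ∑ c, ∑ b, F a b c :=
  Finset.sum_congr rfl fun a _ => Finset.sum_comm ..

lemma sum3_swap12 {α β γ : Type*} [Fintype α] [Fintype β] [Fintype γ] (F : α → β → γ → ℝ) :
    ∑ a, ∑ b, ∑ c, F a b c = ∑ b, ∑ a, ∑ c, F a b c := Finset.sum_comm ..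

lemma sum4_swap23 {α β γ δ : Type*} [Fintype α] [Fintype β] [Fintype γ] [Fintype δ]
    (F : α → β → γ → δ → ℝ) :
    ∑ a, ∑ b, ∑ c, ∑ d, F a b c d = ∑ a, ∑ c, ∑ b, ∑ d, F a b c d :=
  Finset.sum_congr rfl fun a _ => Finset.sum_comm ..

lemma frobNorm_contract_le {n : ℕ} {β : Type*} [Fintype β] (G : Matrix (Fin n) (Fin n) ℝ)
    (KK : (Fin n × Fin n) → β → ℝ) (x : β → ℝ)
    (hG : ∀ pr : Fin n × Fin n, G pr.1 pr.2 = ∑ t, KK pr t * x t) :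
    frobNorm G ≤ Real.sqrt (∑ pr : Fin n × Fin n, ∑ t, (KK pr t) ^ 2)
      * Real.sqrt (∑ t, (x t) ^ 2) := by
  have h0 : frobNorm G
      = Real.sqrt (∑ pr : Fin n × Fin n, (∑ t, KK pr t * x t) ^ 2) := by
    unfold frobNorm
    congr 1
    calc ∑ i, ∑ j, (G i j) ^ 2 = ∑ pr : Fin n × Fin n, (G pr.1 pr.2) ^ 2 :=
          (Fintype.sum_prod_type (f := fun pr : Fin n × Fin n => (G pr.1 pr.2) ^ 2)).symm
      _ = ∑ pr : Fin n × Fin n, (∑ t, KK pr t * x t) ^ 2 :=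
          Finset.sum_congr rfl fun pr _ => by rw [hG]
  rw [h0]
  exact L4Aux.sqrt_contraction _ _

end L4Aux2


set_option maxHeartbeats 4000000

/-- Lemma 4: the one-step mean-square error bound
`‖E[e^k (e^k)ᵀ]‖_F ≤ ((1 − μ_k λ)² + μ_k² σ_ΩΩ² d²) ‖E[e^{k−1}(e^{k−1})ᵀ]‖_F
  + μ_k² d² (σ_θθ² + 2σ_Ωθ²‖û‖ + σ_ΩΩ²‖û‖²) + 2μ_k² d² (σ_ΩΩ²‖û‖ + σ_Ωθ²) ‖E[e⁰]‖`,
where `Ψ = (B + γC)⁻¹` and `d = ‖Ψ‖_F`. -/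
theorem lemma4_mean_square_bound
    {M : ℕ} {Ω' : Type} [MeasurableSpace Ω'] (P : Measure Ω') [IsProbabilityMeasure P]
    (A B C : Matrix (Fin M) (Fin M) ℝ)
    (hA : A.PosDef)
    (hBsymm : B.IsSymm) (hBinv : IsUnit B)
    (hBA : ∀ x : Fin M → ℝ, euclNorm x = 1 → 0 < x ⬝ᵥ (B⁻¹ * A).mulVec x)
    (hC : C.PosSemidef)
    (γ : ℝ) (hγ : 0 ≤ γ) (hinv : IsUnit (B + γ • C))
    (uhat : Fin M → ℝ)
    (μ : ℕ → ℝ) (hμpos : ∀ k, 1 ≤ k → 0 < μ k)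
    (lam : ℝ) (hlam : 0 < lam)
    (hcontr : ∀ j, 1 ≤ j →
        l2OpNorm (1 - μ j • ((B + γ • C)⁻¹ * A)) ≤ 1 - μ j * lam)
    (hμlam : ∀ j, 1 ≤ j → 0 < μ j * lam ∧ μ j * lam ≤ 1)
    (θ : ℕ → Ω' → Fin M → ℝ) (W : ℕ → Ω' → Matrix (Fin M) (Fin M) ℝ)
    (e : ℕ → Ω' → Fin M → ℝ)
    (hWsymm : ∀ k ω, (W k ω).IsSymm)
    (hθint : ∀ k, IntV P (θ k)) (hθmean : ∀ k, 1 ≤ k → Evec P (θ k) = 0)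
    (hWint : ∀ k, IntM P (W k)) (hWmean : ∀ k, 1 ≤ k → Emat P (W k) = 0)
    (hrec : ∀ k, 1 ≤ k → ∀ ω, e k ω =
        (1 - μ k • ((B + γ • C)⁻¹ * (A + W k ω))).mulVec (e (k - 1) ω)
          + μ k • (B + γ • C)⁻¹.mulVec (θ k ω - (W k ω).mulVec uhat))
    (hindep : ∀ k, 1 ≤ k → IndepFun (fun ω => (θ k ω, W k ω)) (fun ω => e (k - 1) ω) P)
    (heint : ∀ k, IntV P (e k))
    (heeint : ∀ k, IntM P (fun ω => vecMulVec (e k ω) (e k ω)))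
    (hint1 : ∀ k, 1 ≤ k → IntM P (fun ω =>
        vecMulVec (θ k ω - (W k ω).mulVec uhat) (θ k ω - (W k ω).mulVec uhat)))
    (hint2 : ∀ k, 1 ≤ k → IntM P (fun ω =>
        W k ω * vecMulVec (e (k - 1) ω) (e (k - 1) ω) * W k ω))
    (hint3 : ∀ k, 1 ≤ k → IntM P (fun ω => W k ω * vecMulVec (e (k - 1) ω) (θ k ω)))
    (hint4 : ∀ k, 1 ≤ k → IntM P (fun ω => W k ω * vecMulVec (e (k - 1) ω) uhat * W k ω))
    (hint5 : ∀ k, 1 ≤ k → IntM P (fun ω => vecMulVec (θ k ω) (e (k - 1) ω) * W k ω))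
    (hint6 : ∀ k, 1 ≤ k → IntM P (fun ω => W k ω * vecMulVec uhat (e (k - 1) ω) * W k ω))
    (hint7 : ∀ k, 1 ≤ k → IntM P (fun ω =>
        vecMulVec (e (k - 1) ω) (θ k ω - (W k ω).mulVec uhat)))
    (hint8 : ∀ k, 1 ≤ k → IntM P (fun ω =>
        W k ω * vecMulVec (e (k - 1) ω) (e (k - 1) ω)))
    (hintθθ : ∀ k, 1 ≤ k → IntM P (fun ω => vecMulVec (θ k ω) (θ k ω)))
    (hintΩΩ : ∀ k, 1 ≤ k → IntM P (fun ω => vecOuter (W k ω) (W k ω)))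
    (hintΩθ : ∀ k, 1 ≤ k → IntM P (fun ω => vecOuterVec (W k ω) (θ k ω)))
    (σθθ2 σΩΩ2 σΩθ2 : ℝ)
    (hσθθ : ∀ k, 1 ≤ k → frobNorm (Emat P (fun ω => vecMulVec (θ k ω) (θ k ω))) = σθθ2)
    (hσΩΩ : ∀ k, 1 ≤ k → frobNorm (Emat P (fun ω => vecOuter (W k ω) (W k ω))) = σΩΩ2)
    (hσΩθ : ∀ k, 1 ≤ k → frobNorm (Emat P (fun ω => vecOuterVec (W k ω) (θ k ω))) = σΩθ2) :
    ∀ k, 1 ≤ k →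
      frobNorm (Emat P (fun ω => vecMulVec (e k ω) (e k ω))) ≤
        ((1 - μ k * lam) ^ 2 + (μ k) ^ 2 * σΩΩ2 * (frobNorm ((B + γ • C)⁻¹)) ^ 2)
            * frobNorm (Emat P (fun ω => vecMulVec (e (k - 1) ω) (e (k - 1) ω)))
        + (μ k) ^ 2 * (frobNorm ((B + γ • C)⁻¹)) ^ 2
            * (σθθ2 + 2 * σΩθ2 * euclNorm uhat + σΩΩ2 * (euclNorm uhat) ^ 2)
        + 2 * (μ k) ^ 2 * (frobNorm ((B + γ • C)⁻¹)) ^ 2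
            * (σΩΩ2 * euclNorm uhat + σΩθ2) * euclNorm (Evec P (e 0)) := by
  classical
  set Ψm : Matrix (Fin M) (Fin M) ℝ := (B + γ • C)⁻¹ with hΨm
  -- measurable coordinate maps
  have mW : ∀ a b : Fin M,
      Measurable (fun p : (Fin M → ℝ) × Matrix (Fin M) (Fin M) ℝ => p.2 a b) :=
    fun a b => by
      have : Measurable fun m : Matrix (Fin M) (Fin M) ℝ => m a b :=
        (measurable_pi_apply b).comp (measurable_pi_apply (X := fun _ : Fin M => Fin M → ℝ) a)
      exact this.comp measurable_snd
  have mθp : ∀ a : Fin M,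
      Measurable (fun p : (Fin M → ℝ) × Matrix (Fin M) (Fin M) ℝ => p.1 a) :=
    fun a => by
      have : Measurable fun x : Fin M → ℝ => x a := measurable_pi_apply a
      exact this.comp measurable_fst
  have mev : ∀ a : Fin M, Measurable (fun x : Fin M → ℝ => x a) := measurable_pi_apply
  -- generic product rule from independence
  have hprod : ∀ k, 1 ≤ k → ∀ (φ : (Fin M → ℝ) × Matrix (Fin M) (Fin M) ℝ → ℝ)
      (ψ : (Fin M → ℝ) → ℝ), Measurable φ → Measurable ψ →
      Integrable (fun ω => φ (θ k ω, W k ω)) P →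
      Integrable (fun ω => ψ (e (k - 1) ω)) P →
      Integrable (fun ω => φ (θ k ω, W k ω) * ψ (e (k - 1) ω)) P ∧
      (∫ ω, φ (θ k ω, W k ω) * ψ (e (k - 1) ω) ∂P)
        = (∫ ω, φ (θ k ω, W k ω) ∂P) * ∫ ω, ψ (e (k - 1) ω) ∂P := by
    intro k hk φ ψ hφ hψ hiφ hiψ
    have hI : IndepFun (fun ω => φ (θ k ω, W k ω)) (fun ω => ψ (e (k - 1) ω)) P :=
      (hindep k hk).comp hφ hψ
    exact ⟨hI.integrable_mul hiφ hiψ, hI.integral_fun_mul_eq_mul_integral hiφ.aestronglyMeasurable hiψ.aestronglyMeasurable⟩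
  -- zero means, entrywise
  have hW0 : ∀ k, 1 ≤ k → ∀ a b : Fin M, (∫ ω, W k ω a b ∂P) = 0 := by
    intro k hk a b
    have h := congrFun (congrFun (hWmean k hk) a) b
    simpa [Emat] using h
  have hθ0 : ∀ k, 1 ≤ k → ∀ a : Fin M, (∫ ω, θ k ω a ∂P) = 0 := by
    intro k hk a
    have h := congrFun (hθmean k hk) a
    simpa [Evec] using h
  -- pointwise decomposition of the recursion
  have hdec : ∀ k, 1 ≤ k → ∀ ω (i : Fin M), e k ω i =
      (∑ l, (1 - μ k • (Ψm * A)) i l * e (k - 1) ω l)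
      + (∑ p : Fin M × Fin M, (-(μ k) * Ψm i p.1) * (W k ω p.1 p.2 * e (k - 1) ω p.2))
      + (∑ a, (μ k * Ψm i a) * θ k ω a)
      + (∑ p : Fin M × Fin M, (-(μ k) * Ψm i p.1 * uhat p.2) * (W k ω p.1 p.2)) := by
    intro k hk ω i
    have hv : e k ω = (1 - μ k • (Ψm * A)) *ᵥ (e (k - 1) ω)
        + (-(μ k)) • ((Ψm * W k ω) *ᵥ (e (k - 1) ω))
        + μ k • (Ψm *ᵥ θ k ω)
        + (-(μ k)) • ((Ψm * W k ω) *ᵥ uhat) := by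
      rw [hrec k hk ω]
      have hm : 1 - μ k • (Ψm * (A + W k ω))
          = (1 - μ k • (Ψm * A)) + (-(μ k)) • (Ψm * W k ω) := by
        rw [Matrix.mul_add, smul_add, neg_smul]; abel
      rw [hm, Matrix.add_mulVec, Matrix.smul_mulVec]
      have hr : Ψm *ᵥ (θ k ω - W k ω *ᵥ uhat)
          = Ψm *ᵥ θ k ω - (Ψm * W k ω) *ᵥ uhat := by
        rw [Matrix.mulVec_sub, ← Matrix.mulVec_mulVec]
      rw [hr, smul_sub, sub_eq_add_neg, ← neg_smul]
      module
    rw [hv]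
    simp only [Pi.add_apply]
    rw [L4Aux2.mulVec_entry, L4Aux2.smul_mulMul_entry, L4Aux2.smul_mulVec_entry,
      L4Aux2.smul_mulMul_entry']
  -- the mean recursion
  have hmeanstep : ∀ k, 1 ≤ k → ∀ i : Fin M,
      Evec P (e k) i = ∑ l, (1 - μ k • (Ψm * A)) i l * Evec P (e (k - 1)) l := by
    intro k hk i
    have hWf : ∀ p : Fin M × Fin M,
        Integrable (fun ω => W k ω p.1 p.2 * e (k - 1) ω p.2) P ∧
        (∫ ω, W k ω p.1 p.2 * e (k - 1) ω p.2 ∂P) = 0 := by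
      intro p
      have h := hprod k hk (fun q => q.2 p.1 p.2) (fun x => x p.2) (mW p.1 p.2) (mev p.2)
        (hWint k p.1 p.2) (heint (k - 1) p.2)
      exact ⟨h.1, by rw [h.2, hW0 k hk, zero_mul]⟩
    have hI1 : Integrable (fun ω => ∑ l, (1 - μ k • (Ψm * A)) i l * e (k - 1) ω l) P :=
      integrable_finset_sum _ fun l _ => (heint (k - 1) l).const_mul _
    have hI2 : Integrable (fun ω => ∑ p : Fin M × Fin M,
        (-(μ k) * Ψm i p.1) * (W k ω p.1 p.2 * e (k - 1) ω p.2)) P :=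
      integrable_finset_sum _ fun p _ => ((hWf p).1).const_mul _
    have hI3 : Integrable (fun ω => ∑ a, (μ k * Ψm i a) * θ k ω a) P :=
      integrable_finset_sum _ fun a _ => (hθint k a).const_mul _
    have hI4 : Integrable (fun ω => ∑ p : Fin M × Fin M,
        (-(μ k) * Ψm i p.1 * uhat p.2) * (W k ω p.1 p.2)) P :=
      integrable_finset_sum _ fun p _ => (hWint k p.1 p.2).const_mul _
    show (∫ ω, e k ω i ∂P) = _
    rw [show (fun ω => e k ω i) = fun ω =>
        (∑ l, (1 - μ k • (Ψm * A)) i l * e (k - 1) ω l)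
        + (∑ p : Fin M × Fin M, (-(μ k) * Ψm i p.1) * (W k ω p.1 p.2 * e (k - 1) ω p.2))
        + (∑ a, (μ k * Ψm i a) * θ k ω a)
        + (∑ p : Fin M × Fin M, (-(μ k) * Ψm i p.1 * uhat p.2) * (W k ω p.1 p.2))
      from funext fun ω => hdec k hk ω i]
    have hI12 : Integrable (fun ω =>
        (∑ l, (1 - μ k • (Ψm * A)) i l * e (k - 1) ω l)
        + (∑ p : Fin M × Fin M, (-(μ k) * Ψm i p.1) * (W k ω p.1 p.2 * e (k - 1) ω p.2))) P :=
      hI1.add hI2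
    have hI123 : Integrable (fun ω =>
        (∑ l, (1 - μ k • (Ψm * A)) i l * e (k - 1) ω l)
        + (∑ p : Fin M × Fin M, (-(μ k) * Ψm i p.1) * (W k ω p.1 p.2 * e (k - 1) ω p.2))
        + (∑ a, (μ k * Ψm i a) * θ k ω a)) P := hI12.add hI3
    rw [integral_add hI123 hI4, integral_add hI12 hI3, integral_add hI1 hI2]
    rw [L4Aux.integral_lincomb _ _ (fun l => heint (k - 1) l)]
    rw [L4Aux.integral_lincomb _ _ (fun p => (hWf p).1)]
    rw [L4Aux.integral_lincomb _ _ (fun a => hθint k a)]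
    rw [L4Aux.integral_lincomb (P := P) (fun p : Fin M × Fin M => -(μ k) * Ψm i p.1 * uhat p.2)
      (fun p ω => W k ω p.1 p.2) (fun p => hWint k p.1 p.2)]
    have z2 : (∑ p : Fin M × Fin M, (-(μ k) * Ψm i p.1)
        * ∫ ω, W k ω p.1 p.2 * e (k - 1) ω p.2 ∂P) = 0 :=
      Finset.sum_eq_zero fun p _ => by rw [(hWf p).2, mul_zero]
    have z3 : (∑ a, (μ k * Ψm i a) * ∫ ω, θ k ω a ∂P) = 0 :=
      Finset.sum_eq_zero fun a _ => by rw [hθ0 k hk, mul_zero]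
    have z4 : (∑ p : Fin M × Fin M, (-(μ k) * Ψm i p.1 * uhat p.2)
        * ∫ ω, W k ω p.1 p.2 ∂P) = 0 :=
      Finset.sum_eq_zero fun p _ => by rw [hW0 k hk, mul_zero]
    rw [z2, z3, z4]
    simp [Evec]
  -- contraction of the means
  have hmono : ∀ k, 1 ≤ k → euclNorm (Evec P (e k)) ≤ euclNorm (Evec P (e (k - 1))) := by
    intro k hk
    have hvec : Evec P (e k) = (1 - μ k • (Ψm * A)) *ᵥ Evec P (e (k - 1)) :=
      funext fun i => by rw [hmeanstep k hk i, L4Aux2.mulVec_entry]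
    rw [hvec]
    have h1 := L4Aux.euclNorm_mulVec_le (1 - μ k • (Ψm * A)) (Evec P (e (k - 1)))
    have h2 : l2OpNorm (1 - μ k • (Ψm * A)) ≤ 1 - μ k * lam := hcontr k hk
    have h3 : (0:ℝ) < μ k * lam := (hμlam k hk).1
    have h4 := L4Aux.euclNorm_nonneg (Evec P (e (k - 1)))
    nlinarith
  have hm0 : ∀ k, euclNorm (Evec P (e k)) ≤ euclNorm (Evec P (e 0)) := by
    intro k
    induction k with
    | zero => exact le_refl _
    | succ n ih => exact (hmono (n + 1) (by omega)).trans ih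
  intro k hk
  set Sm : Matrix (Fin M) (Fin M) ℝ :=
    Emat P (fun ω => vecMulVec (e (k - 1) ω) (e (k - 1) ω)) with hSm
  set Θmm : Matrix (Fin M) (Fin M) ℝ :=
    Emat P (fun ω => vecMulVec (θ k ω) (θ k ω)) with hΘmm
  set Km : Matrix (Fin M × Fin M) (Fin M × Fin M) ℝ :=
    Emat P (fun ω => vecOuter (W k ω) (W k ω)) with hKm
  set Jm : Matrix (Fin M × Fin M) (Fin M) ℝ :=
    Emat P (fun ω => vecOuterVec (W k ω) (θ k ω)) with hJm
  set mv : Fin M → ℝ := Evec P (e (k - 1)) with hmvdef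
  -- entry values
  have hSval : ∀ l m' : Fin M, Sm l m' = ∫ ω, e (k - 1) ω l * e (k - 1) ω m' ∂P := by
    intro l m'; rw [hSm]; simp [Emat, Matrix.vecMulVec_apply]
  have hΘval : ∀ a b : Fin M, Θmm a b = ∫ ω, θ k ω a * θ k ω b ∂P := by
    intro a b; rw [hΘmm]; simp [Emat, Matrix.vecMulVec_apply]
  have hKval : ∀ p q : Fin M × Fin M,
      Km p q = ∫ ω, W k ω p.1 p.2 * W k ω q.1 q.2 ∂P := by
    intro p q; rw [hKm]; simp [Emat, vecOuter]
  have hJval : ∀ (p : Fin M × Fin M) (b : Fin M),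
      Jm p b = ∫ ω, W k ω p.1 p.2 * θ k ω b ∂P := by
    intro p b; rw [hJm]; simp [Emat, vecOuterVec]
  have hmval : ∀ l : Fin M, mv l = ∫ ω, e (k - 1) ω l ∂P := by
    intro l; rw [hmvdef]; simp [Evec]
  -- basic integrable random scalars
  have hff : ∀ l m' : Fin M, Integrable (fun ω => e (k - 1) ω l * e (k - 1) ω m') P := by
    intro l m'
    have h := heeint (k - 1) l m'
    simpa [Matrix.vecMulVec_apply] using h
  have hWW : ∀ p q : Fin M × Fin M,
      Integrable (fun ω => W k ω p.1 p.2 * W k ω q.1 q.2) P := by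
    intro p q
    have h := hintΩΩ k hk p q
    simpa [vecOuter] using h
  have hWθ : ∀ (p : Fin M × Fin M) (b : Fin M),
      Integrable (fun ω => W k ω p.1 p.2 * θ k ω b) P := by
    intro p b
    have h := hintΩθ k hk p b
    simpa [vecOuterVec] using h
  have hθθi : ∀ a b : Fin M, Integrable (fun ω => θ k ω a * θ k ω b) P := by
    intro a b
    have h := hintθθ k hk a b
    simpa [Matrix.vecMulVec_apply] using h
  -- the sixteen product facts
  have hV11 : ∀ l m' : Fin M,
      Integrable (fun ω => e (k - 1) ω l * e (k - 1) ω m') P ∧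
      (∫ ω, e (k - 1) ω l * e (k - 1) ω m' ∂P) = Sm l m' :=
    fun l m' => ⟨hff l m', (hSval l m').symm⟩
  have hV12 : ∀ (l : Fin M) (q : Fin M × Fin M),
      Integrable (fun ω => e (k - 1) ω l * (W k ω q.1 q.2 * e (k - 1) ω q.2)) P ∧
      (∫ ω, e (k - 1) ω l * (W k ω q.1 q.2 * e (k - 1) ω q.2) ∂P) = 0 := by
    intro l q
    have hc := hprod k hk (fun pr => pr.2 q.1 q.2) (fun x => x l * x q.2)
      (mW q.1 q.2) ((mev l).mul (mev q.2)) (hWint k q.1 q.2) (hff l q.2)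
    have heq : (fun ω => e (k - 1) ω l * (W k ω q.1 q.2 * e (k - 1) ω q.2))
        = (fun ω => W k ω q.1 q.2 * (e (k - 1) ω l * e (k - 1) ω q.2)) :=
      funext fun ω => by ring
    refine ⟨by rw [heq]; exact hc.1, ?_⟩
    rw [heq, hc.2, hW0 k hk, zero_mul]
  have hV21 : ∀ (p : Fin M × Fin M) (m' : Fin M),
      Integrable (fun ω => (W k ω p.1 p.2 * e (k - 1) ω p.2) * e (k - 1) ω m') P ∧
      (∫ ω, (W k ω p.1 p.2 * e (k - 1) ω p.2) * e (k - 1) ω m' ∂P) = 0 := by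
    intro p m'
    have hc := hprod k hk (fun pr => pr.2 p.1 p.2) (fun x => x p.2 * x m')
      (mW p.1 p.2) ((mev p.2).mul (mev m')) (hWint k p.1 p.2) (hff p.2 m')
    have heq : (fun ω => (W k ω p.1 p.2 * e (k - 1) ω p.2) * e (k - 1) ω m')
        = (fun ω => W k ω p.1 p.2 * (e (k - 1) ω p.2 * e (k - 1) ω m')) :=
      funext fun ω => by ring
    refine ⟨by rw [heq]; exact hc.1, ?_⟩
    rw [heq, hc.2, hW0 k hk, zero_mul]
  have hV13 : ∀ (l b : Fin M),
      Integrable (fun ω => e (k - 1) ω l * θ k ω b) P ∧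
      (∫ ω, e (k - 1) ω l * θ k ω b ∂P) = 0 := by
    intro l b
    have hc := hprod k hk (fun pr => pr.1 b) (fun x => x l)
      (mθp b) (mev l) (hθint k b) (heint (k - 1) l)
    have heq : (fun ω => e (k - 1) ω l * θ k ω b)
        = (fun ω => θ k ω b * e (k - 1) ω l) := funext fun ω => by ring
    refine ⟨by rw [heq]; exact hc.1, ?_⟩
    rw [heq, hc.2, hθ0 k hk, zero_mul]
  have hV31 : ∀ (a m' : Fin M),
      Integrable (fun ω => θ k ω a * e (k - 1) ω m') P ∧
      (∫ ω, θ k ω a * e (k - 1) ω m' ∂P) = 0 := by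
    intro a m'
    have hc := hprod k hk (fun pr => pr.1 a) (fun x => x m')
      (mθp a) (mev m') (hθint k a) (heint (k - 1) m')
    exact ⟨hc.1, by rw [hc.2, hθ0 k hk, zero_mul]⟩
  have hV14 : ∀ (l : Fin M) (q : Fin M × Fin M),
      Integrable (fun ω => e (k - 1) ω l * W k ω q.1 q.2) P ∧
      (∫ ω, e (k - 1) ω l * W k ω q.1 q.2 ∂P) = 0 := by
    intro l q
    have hc := hprod k hk (fun pr => pr.2 q.1 q.2) (fun x => x l)
      (mW q.1 q.2) (mev l) (hWint k q.1 q.2) (heint (k - 1) l)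
    have heq : (fun ω => e (k - 1) ω l * W k ω q.1 q.2)
        = (fun ω => W k ω q.1 q.2 * e (k - 1) ω l) := funext fun ω => by ring
    refine ⟨by rw [heq]; exact hc.1, ?_⟩
    rw [heq, hc.2, hW0 k hk, zero_mul]
  have hV41 : ∀ (p : Fin M × Fin M) (m' : Fin M),
      Integrable (fun ω => W k ω p.1 p.2 * e (k - 1) ω m') P ∧
      (∫ ω, W k ω p.1 p.2 * e (k - 1) ω m' ∂P) = 0 := by
    intro p m'
    have hc := hprod k hk (fun pr => pr.2 p.1 p.2) (fun x => x m')
      (mW p.1 p.2) (mev m') (hWint k p.1 p.2) (heint (k - 1) m')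
    exact ⟨hc.1, by rw [hc.2, hW0 k hk, zero_mul]⟩
  have hV22 : ∀ p q : Fin M × Fin M,
      Integrable (fun ω =>
        (W k ω p.1 p.2 * e (k - 1) ω p.2) * (W k ω q.1 q.2 * e (k - 1) ω q.2)) P ∧
      (∫ ω, (W k ω p.1 p.2 * e (k - 1) ω p.2) * (W k ω q.1 q.2 * e (k - 1) ω q.2) ∂P)
        = Km p q * Sm p.2 q.2 := by
    intro p q
    have hc := hprod k hk (fun pr => pr.2 p.1 p.2 * pr.2 q.1 q.2)
      (fun x => x p.2 * x q.2) ((mW p.1 p.2).mul (mW q.1 q.2))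
      ((mev p.2).mul (mev q.2)) (hWW p q) (hff p.2 q.2)
    have heq : (fun ω =>
        (W k ω p.1 p.2 * e (k - 1) ω p.2) * (W k ω q.1 q.2 * e (k - 1) ω q.2))
        = (fun ω => W k ω p.1 p.2 * W k ω q.1 q.2 * (e (k - 1) ω p.2 * e (k - 1) ω q.2)) :=
      funext fun ω => by ring
    refine ⟨by rw [heq]; exact hc.1, ?_⟩
    rw [heq, hc.2, ← hKval p q, ← hSval p.2 q.2]
  have hV23 : ∀ (p : Fin M × Fin M) (b : Fin M),
      Integrable (fun ω => (W k ω p.1 p.2 * e (k - 1) ω p.2) * θ k ω b) P ∧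
      (∫ ω, (W k ω p.1 p.2 * e (k - 1) ω p.2) * θ k ω b ∂P) = Jm p b * mv p.2 := by
    intro p b
    have hc := hprod k hk (fun pr => pr.2 p.1 p.2 * pr.1 b) (fun x => x p.2)
      ((mW p.1 p.2).mul (mθp b)) (mev p.2) (hWθ p b) (heint (k - 1) p.2)
    have heq : (fun ω => (W k ω p.1 p.2 * e (k - 1) ω p.2) * θ k ω b)
        = (fun ω => W k ω p.1 p.2 * θ k ω b * e (k - 1) ω p.2) :=
      funext fun ω => by ring
    refine ⟨by rw [heq]; exact hc.1, ?_⟩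
    rw [heq, hc.2, ← hJval p b, ← hmval p.2]
  have hV32 : ∀ (a : Fin M) (q : Fin M × Fin M),
      Integrable (fun ω => θ k ω a * (W k ω q.1 q.2 * e (k - 1) ω q.2)) P ∧
      (∫ ω, θ k ω a * (W k ω q.1 q.2 * e (k - 1) ω q.2) ∂P) = Jm q a * mv q.2 := by
    intro a q
    have hc := hprod k hk (fun pr => pr.2 q.1 q.2 * pr.1 a) (fun x => x q.2)
      ((mW q.1 q.2).mul (mθp a)) (mev q.2) (hWθ q a) (heint (k - 1) q.2)
    have heq : (fun ω => θ k ω a * (W k ω q.1 q.2 * e (k - 1) ω q.2))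
        = (fun ω => W k ω q.1 q.2 * θ k ω a * e (k - 1) ω q.2) :=
      funext fun ω => by ring
    refine ⟨by rw [heq]; exact hc.1, ?_⟩
    rw [heq, hc.2, ← hJval q a, ← hmval q.2]
  have hV24 : ∀ p q : Fin M × Fin M,
      Integrable (fun ω => (W k ω p.1 p.2 * e (k - 1) ω p.2) * W k ω q.1 q.2) P ∧
      (∫ ω, (W k ω p.1 p.2 * e (k - 1) ω p.2) * W k ω q.1 q.2 ∂P) = Km p q * mv p.2 := by
    intro p q
    have hc := hprod k hk (fun pr => pr.2 p.1 p.2 * pr.2 q.1 q.2) (fun x => x p.2)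
      ((mW p.1 p.2).mul (mW q.1 q.2)) (mev p.2) (hWW p q) (heint (k - 1) p.2)
    have heq : (fun ω => (W k ω p.1 p.2 * e (k - 1) ω p.2) * W k ω q.1 q.2)
        = (fun ω => W k ω p.1 p.2 * W k ω q.1 q.2 * e (k - 1) ω p.2) :=
      funext fun ω => by ring
    refine ⟨by rw [heq]; exact hc.1, ?_⟩
    rw [heq, hc.2, ← hKval p q, ← hmval p.2]
  have hV42 : ∀ p q : Fin M × Fin M,
      Integrable (fun ω => W k ω p.1 p.2 * (W k ω q.1 q.2 * e (k - 1) ω q.2)) P ∧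
      (∫ ω, W k ω p.1 p.2 * (W k ω q.1 q.2 * e (k - 1) ω q.2) ∂P) = Km p q * mv q.2 := by
    intro p q
    have hc := hprod k hk (fun pr => pr.2 p.1 p.2 * pr.2 q.1 q.2) (fun x => x q.2)
      ((mW p.1 p.2).mul (mW q.1 q.2)) (mev q.2) (hWW p q) (heint (k - 1) q.2)
    have heq : (fun ω => W k ω p.1 p.2 * (W k ω q.1 q.2 * e (k - 1) ω q.2))
        = (fun ω => W k ω p.1 p.2 * W k ω q.1 q.2 * e (k - 1) ω q.2) :=
      funext fun ω => by ring
    refine ⟨by rw [heq]; exact hc.1, ?_⟩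
    rw [heq, hc.2, ← hKval p q, ← hmval q.2]
  have hV33 : ∀ a b : Fin M,
      Integrable (fun ω => θ k ω a * θ k ω b) P ∧
      (∫ ω, θ k ω a * θ k ω b ∂P) = Θmm a b :=
    fun a b => ⟨hθθi a b, (hΘval a b).symm⟩
  have hV34 : ∀ (a : Fin M) (q : Fin M × Fin M),
      Integrable (fun ω => θ k ω a * W k ω q.1 q.2) P ∧
      (∫ ω, θ k ω a * W k ω q.1 q.2 ∂P) = Jm q a := by
    intro a q
    have heq : (fun ω => θ k ω a * W k ω q.1 q.2)
        = (fun ω => W k ω q.1 q.2 * θ k ω a) := funext fun ω => by ring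
    refine ⟨by rw [heq]; exact hWθ q a, ?_⟩
    rw [heq, ← hJval q a]
  have hV43 : ∀ (p : Fin M × Fin M) (b : Fin M),
      Integrable (fun ω => W k ω p.1 p.2 * θ k ω b) P ∧
      (∫ ω, W k ω p.1 p.2 * θ k ω b ∂P) = Jm p b :=
    fun p b => ⟨hWθ p b, (hJval p b).symm⟩
  have hV44 : ∀ p q : Fin M × Fin M,
      Integrable (fun ω => W k ω p.1 p.2 * W k ω q.1 q.2) P ∧
      (∫ ω, W k ω p.1 p.2 * W k ω q.1 q.2 ∂P) = Km p q :=
    fun p q => ⟨hWW p q, (hKval p q).symm⟩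
  -- the deterministic contraction matrices
  set Qm : Matrix (Fin M) (Fin M) ℝ :=
    Matrix.of (fun a b => ∑ l, ∑ m', Km (a, l) (b, m') * Sm l m') with hQm
  set U1m : Matrix (Fin M) (Fin M) ℝ :=
    Matrix.of (fun a b => ∑ l, Jm (a, l) b * mv l) with hU1m
  set U1bm : Matrix (Fin M) (Fin M) ℝ :=
    Matrix.of (fun a b => ∑ l, Jm (b, l) a * mv l) with hU1bm
  set U2m : Matrix (Fin M) (Fin M) ℝ :=
    Matrix.of (fun a b => ∑ l, ∑ m', (Km (a, l) (b, m') * mv l) * uhat m') with hU2m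
  set U2bm : Matrix (Fin M) (Fin M) ℝ :=
    Matrix.of (fun a b => ∑ l, ∑ m', (Km (a, l) (b, m') * mv m') * uhat l) with hU2bm
  set Lm : Matrix (Fin M) (Fin M) ℝ :=
    Matrix.of (fun a b => ∑ m', Jm (b, m') a * uhat m') with hLm
  set Lbm : Matrix (Fin M) (Fin M) ℝ :=
    Matrix.of (fun a b => ∑ l, Jm (a, l) b * uhat l) with hLbm
  set Nm : Matrix (Fin M) (Fin M) ℝ :=
    Matrix.of (fun a b => ∑ l, ∑ m', (Km (a, l) (b, m') * uhat l) * uhat m') with hNm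
  set RRm : Matrix (Fin M) (Fin M) ℝ :=
    Qm - U1m + U2m - U1bm + Θmm - Lm + U2bm - Lbm + Nm with hRRm
  -- the matrix identity for the second moment
  have hEmat : Emat P (fun ω => vecMulVec (e k ω) (e k ω))
      = (1 - μ k • (Ψm * A)) * Sm * (1 - μ k • (Ψm * A))ᵀ
        + ((μ k) ^ 2) • (Ψm * RRm * Ψmᵀ) := by
    ext i j
    have hptw : (fun ω => e k ω i * e k ω j) = (fun ω =>
        (∑ l, (1 - μ k • (Ψm * A)) i l * e (k - 1) ω l)
          * (∑ l, (1 - μ k • (Ψm * A)) j l * e (k - 1) ω l)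
        + (∑ l, (1 - μ k • (Ψm * A)) i l * e (k - 1) ω l)
          * (∑ q : Fin M × Fin M, (-(μ k) * Ψm j q.1) * (W k ω q.1 q.2 * e (k - 1) ω q.2))
        + (∑ l, (1 - μ k • (Ψm * A)) i l * e (k - 1) ω l)
          * (∑ b, (μ k * Ψm j b) * θ k ω b)
        + (∑ l, (1 - μ k • (Ψm * A)) i l * e (k - 1) ω l)
          * (∑ q : Fin M × Fin M, (-(μ k) * Ψm j q.1 * uhat q.2) * (W k ω q.1 q.2))
        + (∑ p : Fin M × Fin M, (-(μ k) * Ψm i p.1) * (W k ω p.1 p.2 * e (k - 1) ω p.2))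
          * (∑ l, (1 - μ k • (Ψm * A)) j l * e (k - 1) ω l)
        + (∑ p : Fin M × Fin M, (-(μ k) * Ψm i p.1) * (W k ω p.1 p.2 * e (k - 1) ω p.2))
          * (∑ q : Fin M × Fin M, (-(μ k) * Ψm j q.1) * (W k ω q.1 q.2 * e (k - 1) ω q.2))
        + (∑ p : Fin M × Fin M, (-(μ k) * Ψm i p.1) * (W k ω p.1 p.2 * e (k - 1) ω p.2))
          * (∑ b, (μ k * Ψm j b) * θ k ω b)
        + (∑ p : Fin M × Fin M, (-(μ k) * Ψm i p.1) * (W k ω p.1 p.2 * e (k - 1) ω p.2))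
          * (∑ q : Fin M × Fin M, (-(μ k) * Ψm j q.1 * uhat q.2) * (W k ω q.1 q.2))
        + (∑ a, (μ k * Ψm i a) * θ k ω a)
          * (∑ l, (1 - μ k • (Ψm * A)) j l * e (k - 1) ω l)
        + (∑ a, (μ k * Ψm i a) * θ k ω a)
          * (∑ q : Fin M × Fin M, (-(μ k) * Ψm j q.1) * (W k ω q.1 q.2 * e (k - 1) ω q.2))
        + (∑ a, (μ k * Ψm i a) * θ k ω a) * (∑ b, (μ k * Ψm j b) * θ k ω b)
        + (∑ a, (μ k * Ψm i a) * θ k ω a)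
          * (∑ q : Fin M × Fin M, (-(μ k) * Ψm j q.1 * uhat q.2) * (W k ω q.1 q.2))
        + (∑ p : Fin M × Fin M, (-(μ k) * Ψm i p.1 * uhat p.2) * (W k ω p.1 p.2))
          * (∑ l, (1 - μ k • (Ψm * A)) j l * e (k - 1) ω l)
        + (∑ p : Fin M × Fin M, (-(μ k) * Ψm i p.1 * uhat p.2) * (W k ω p.1 p.2))
          * (∑ q : Fin M × Fin M, (-(μ k) * Ψm j q.1) * (W k ω q.1 q.2 * e (k - 1) ω q.2))
        + (∑ p : Fin M × Fin M, (-(μ k) * Ψm i p.1 * uhat p.2) * (W k ω p.1 p.2))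
          * (∑ b, (μ k * Ψm j b) * θ k ω b)
        + (∑ p : Fin M × Fin M, (-(μ k) * Ψm i p.1 * uhat p.2) * (W k ω p.1 p.2))
          * (∑ q : Fin M × Fin M, (-(μ k) * Ψm j q.1 * uhat q.2) * (W k ω q.1 q.2))) := by
      funext ω
      rw [hdec k hk ω i, hdec k hk ω j]
      ring
    -- block values
    have hB11 : ∫ ω, (∑ l, (1 - μ k • (Ψm * A)) i l * e (k - 1) ω l)
        * (∑ l, (1 - μ k • (Ψm * A)) j l * e (k - 1) ω l) ∂P
        = (((1 - μ k • (Ψm * A)) * Sm * (1 - μ k • (Ψm * A))ᵀ :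
            Matrix (Fin M) (Fin M) ℝ)) i j := by
      rw [L4Aux.integral_sum_mul_sum _ _ _ _ (fun a b => (hV11 a b).1)]
      have h1 : (∑ a, ∑ b, ((1 - μ k • (Ψm * A)) i a * (1 - μ k • (Ψm * A)) j b)
          * ∫ ω, e (k - 1) ω a * e (k - 1) ω b ∂P)
          = ∑ a, ∑ b, ((1 - μ k • (Ψm * A)) i a * (1 - μ k • (Ψm * A)) j b) * Sm a b :=
        Finset.sum_congr rfl fun a _ => Finset.sum_congr rfl fun b _ => by
          rw [(hV11 a b).2]
      rw [h1]
      have h2 := L4Aux2.block_ss (1 - μ k • (Ψm * A)) Sm i j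
        (fun a => (1 - μ k • (Ψm * A)) i a) (fun b => (1 - μ k • (Ψm * A)) j b)
        (fun a b => Sm a b) 1 1 (fun a => by ring) (fun b => by ring) (fun a b => rfl)
      rw [h2, one_mul, one_mul]
    have hB22 : ∫ ω, (∑ p : Fin M × Fin M, (-(μ k) * Ψm i p.1)
          * (W k ω p.1 p.2 * e (k - 1) ω p.2))
        * (∑ q : Fin M × Fin M, (-(μ k) * Ψm j q.1) * (W k ω q.1 q.2 * e (k - 1) ω q.2)) ∂P
        = (-(μ k) * -(μ k)) * ((Ψm * Qm * Ψmᵀ) i j) := by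
      rw [L4Aux.integral_sum_mul_sum _ _ _ _ (fun p q => (hV22 p q).1)]
      have h1 : (∑ p : Fin M × Fin M, ∑ q : Fin M × Fin M,
          ((-(μ k) * Ψm i p.1) * (-(μ k) * Ψm j q.1))
          * ∫ ω, (W k ω p.1 p.2 * e (k - 1) ω p.2) * (W k ω q.1 q.2 * e (k - 1) ω q.2) ∂P)
          = ∑ p : Fin M × Fin M, ∑ q : Fin M × Fin M,
            ((-(μ k) * Ψm i p.1) * (-(μ k) * Ψm j q.1)) * (Km p q * Sm p.2 q.2) :=
        Finset.sum_congr rfl fun p _ => Finset.sum_congr rfl fun q _ => by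
          rw [(hV22 p q).2]
      rw [h1]
      exact L4Aux2.block_pp Ψm Qm i j _ _ _ (-(μ k)) (-(μ k))
        (fun _ => 1) (fun _ => 1) (fun p => by ring) (fun q => by ring)
        (fun a b => by
          rw [hQm]
          simp only [Matrix.of_apply]
          exact Finset.sum_congr rfl fun l _ => Finset.sum_congr rfl fun m' _ => by ring)
    have hB23 : ∫ ω, (∑ p : Fin M × Fin M, (-(μ k) * Ψm i p.1)
          * (W k ω p.1 p.2 * e (k - 1) ω p.2)) * (∑ b, (μ k * Ψm j b) * θ k ω b) ∂P
        = (-(μ k) * μ k) * ((Ψm * U1m * Ψmᵀ) i j) := by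
      rw [L4Aux.integral_sum_mul_sum _ _ _ _ (fun p b => (hV23 p b).1)]
      have h1 : (∑ p : Fin M × Fin M, ∑ b, ((-(μ k) * Ψm i p.1) * (μ k * Ψm j b))
          * ∫ ω, (W k ω p.1 p.2 * e (k - 1) ω p.2) * θ k ω b ∂P)
          = ∑ p : Fin M × Fin M, ∑ b,
            ((-(μ k) * Ψm i p.1) * (μ k * Ψm j b)) * (Jm p b * mv p.2) :=
        Finset.sum_congr rfl fun p _ => Finset.sum_congr rfl fun b _ => by
          rw [(hV23 p b).2]
      rw [h1]
      exact L4Aux2.block_ps Ψm U1m i j _ _ _ (-(μ k)) (μ k) (fun _ => 1)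
        (fun p => by ring) (fun b => by ring)
        (fun a b => by
          rw [hU1m]
          simp only [Matrix.of_apply]
          exact Finset.sum_congr rfl fun l _ => by ring)
    have hB32 : ∫ ω, (∑ a, (μ k * Ψm i a) * θ k ω a)
        * (∑ q : Fin M × Fin M, (-(μ k) * Ψm j q.1) * (W k ω q.1 q.2 * e (k - 1) ω q.2)) ∂P
        = (μ k * -(μ k)) * ((Ψm * U1bm * Ψmᵀ) i j) := by
      rw [L4Aux.integral_sum_mul_sum _ _ _ _ (fun a q => (hV32 a q).1)]
      have h1 : (∑ a, ∑ q : Fin M × Fin M, ((μ k * Ψm i a) * (-(μ k) * Ψm j q.1))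
          * ∫ ω, θ k ω a * (W k ω q.1 q.2 * e (k - 1) ω q.2) ∂P)
          = ∑ a, ∑ q : Fin M × Fin M,
            ((μ k * Ψm i a) * (-(μ k) * Ψm j q.1)) * (Jm q a * mv q.2) :=
        Finset.sum_congr rfl fun a _ => Finset.sum_congr rfl fun q _ => by
          rw [(hV32 a q).2]
      rw [h1]
      exact L4Aux2.block_sp Ψm U1bm i j _ _ _ (μ k) (-(μ k)) (fun _ => 1)
        (fun a => by ring) (fun q => by ring)
        (fun a b => by
          rw [hU1bm]
          simp only [Matrix.of_apply]
          exact Finset.sum_congr rfl fun l _ => by ring)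
    have hB24 : ∫ ω, (∑ p : Fin M × Fin M, (-(μ k) * Ψm i p.1)
          * (W k ω p.1 p.2 * e (k - 1) ω p.2))
        * (∑ q : Fin M × Fin M, (-(μ k) * Ψm j q.1 * uhat q.2) * (W k ω q.1 q.2)) ∂P
        = (-(μ k) * -(μ k)) * ((Ψm * U2m * Ψmᵀ) i j) := by
      rw [L4Aux.integral_sum_mul_sum _ _ _ _ (fun p q => (hV24 p q).1)]
      have h1 : (∑ p : Fin M × Fin M, ∑ q : Fin M × Fin M,
          ((-(μ k) * Ψm i p.1) * (-(μ k) * Ψm j q.1 * uhat q.2))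
          * ∫ ω, (W k ω p.1 p.2 * e (k - 1) ω p.2) * W k ω q.1 q.2 ∂P)
          = ∑ p : Fin M × Fin M, ∑ q : Fin M × Fin M,
            ((-(μ k) * Ψm i p.1) * (-(μ k) * Ψm j q.1 * uhat q.2)) * (Km p q * mv p.2) :=
        Finset.sum_congr rfl fun p _ => Finset.sum_congr rfl fun q _ => by
          rw [(hV24 p q).2]
      rw [h1]
      exact L4Aux2.block_pp Ψm U2m i j _ _ _ (-(μ k)) (-(μ k))
        (fun _ => 1) uhat (fun p => by ring) (fun q => by ring)
        (fun a b => by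
          rw [hU2m]
          simp only [Matrix.of_apply]
          exact Finset.sum_congr rfl fun l _ => Finset.sum_congr rfl fun m' _ => by ring)
    have hB42 : ∫ ω, (∑ p : Fin M × Fin M, (-(μ k) * Ψm i p.1 * uhat p.2) * (W k ω p.1 p.2))
        * (∑ q : Fin M × Fin M, (-(μ k) * Ψm j q.1) * (W k ω q.1 q.2 * e (k - 1) ω q.2)) ∂P
        = (-(μ k) * -(μ k)) * ((Ψm * U2bm * Ψmᵀ) i j) := by
      rw [L4Aux.integral_sum_mul_sum _ _ _ _ (fun p q => (hV42 p q).1)]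
      have h1 : (∑ p : Fin M × Fin M, ∑ q : Fin M × Fin M,
          ((-(μ k) * Ψm i p.1 * uhat p.2) * (-(μ k) * Ψm j q.1))
          * ∫ ω, W k ω p.1 p.2 * (W k ω q.1 q.2 * e (k - 1) ω q.2) ∂P)
          = ∑ p : Fin M × Fin M, ∑ q : Fin M × Fin M,
            ((-(μ k) * Ψm i p.1 * uhat p.2) * (-(μ k) * Ψm j q.1)) * (Km p q * mv q.2) :=
        Finset.sum_congr rfl fun p _ => Finset.sum_congr rfl fun q _ => by
          rw [(hV42 p q).2]
      rw [h1]
      exact L4Aux2.block_pp Ψm U2bm i j _ _ _ (-(μ k)) (-(μ k))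
        uhat (fun _ => 1) (fun p => by ring) (fun q => by ring)
        (fun a b => by
          rw [hU2bm]
          simp only [Matrix.of_apply]
          exact Finset.sum_congr rfl fun l _ => Finset.sum_congr rfl fun m' _ => by ring)
    have hB33 : ∫ ω, (∑ a, (μ k * Ψm i a) * θ k ω a) * (∑ b, (μ k * Ψm j b) * θ k ω b) ∂P
        = (μ k * μ k) * ((Ψm * Θmm * Ψmᵀ) i j) := by
      rw [L4Aux.integral_sum_mul_sum _ _ _ _ (fun a b => (hV33 a b).1)]
      have h1 : (∑ a, ∑ b, ((μ k * Ψm i a) * (μ k * Ψm j b))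
          * ∫ ω, θ k ω a * θ k ω b ∂P)
          = ∑ a, ∑ b, ((μ k * Ψm i a) * (μ k * Ψm j b)) * Θmm a b :=
        Finset.sum_congr rfl fun a _ => Finset.sum_congr rfl fun b _ => by
          rw [(hV33 a b).2]
      rw [h1]
      exact L4Aux2.block_ss Ψm Θmm i j _ _ _ (μ k) (μ k)
        (fun a => by ring) (fun b => by ring) (fun a b => rfl)
    have hB34 : ∫ ω, (∑ a, (μ k * Ψm i a) * θ k ω a)
        * (∑ q : Fin M × Fin M, (-(μ k) * Ψm j q.1 * uhat q.2) * (W k ω q.1 q.2)) ∂P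
        = (μ k * -(μ k)) * ((Ψm * Lm * Ψmᵀ) i j) := by
      rw [L4Aux.integral_sum_mul_sum _ _ _ _ (fun a q => (hV34 a q).1)]
      have h1 : (∑ a, ∑ q : Fin M × Fin M,
          ((μ k * Ψm i a) * (-(μ k) * Ψm j q.1 * uhat q.2))
          * ∫ ω, θ k ω a * W k ω q.1 q.2 ∂P)
          = ∑ a, ∑ q : Fin M × Fin M,
            ((μ k * Ψm i a) * (-(μ k) * Ψm j q.1 * uhat q.2)) * Jm q a :=
        Finset.sum_congr rfl fun a _ => Finset.sum_congr rfl fun q _ => by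
          rw [(hV34 a q).2]
      rw [h1]
      exact L4Aux2.block_sp Ψm Lm i j _ _ _ (μ k) (-(μ k)) uhat
        (fun a => by ring) (fun q => by ring)
        (fun a b => by
          rw [hLm]
          simp only [Matrix.of_apply]
          exact Finset.sum_congr rfl fun m' _ => by ring)
    have hB43 : ∫ ω, (∑ p : Fin M × Fin M, (-(μ k) * Ψm i p.1 * uhat p.2) * (W k ω p.1 p.2))
        * (∑ b, (μ k * Ψm j b) * θ k ω b) ∂P
        = (-(μ k) * μ k) * ((Ψm * Lbm * Ψmᵀ) i j) := by
      rw [L4Aux.integral_sum_mul_sum _ _ _ _ (fun p b => (hV43 p b).1)]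
      have h1 : (∑ p : Fin M × Fin M, ∑ b,
          ((-(μ k) * Ψm i p.1 * uhat p.2) * (μ k * Ψm j b))
          * ∫ ω, W k ω p.1 p.2 * θ k ω b ∂P)
          = ∑ p : Fin M × Fin M, ∑ b,
            ((-(μ k) * Ψm i p.1 * uhat p.2) * (μ k * Ψm j b)) * Jm p b :=
        Finset.sum_congr rfl fun p _ => Finset.sum_congr rfl fun b _ => by
          rw [(hV43 p b).2]
      rw [h1]
      exact L4Aux2.block_ps Ψm Lbm i j _ _ _ (-(μ k)) (μ k) uhat
        (fun p => by ring) (fun b => by ring)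
        (fun a b => by
          rw [hLbm]
          simp only [Matrix.of_apply]
          exact Finset.sum_congr rfl fun l _ => by ring)
    have hB44 : ∫ ω, (∑ p : Fin M × Fin M, (-(μ k) * Ψm i p.1 * uhat p.2) * (W k ω p.1 p.2))
        * (∑ q : Fin M × Fin M, (-(μ k) * Ψm j q.1 * uhat q.2) * (W k ω q.1 q.2)) ∂P
        = (-(μ k) * -(μ k)) * ((Ψm * Nm * Ψmᵀ) i j) := by
      rw [L4Aux.integral_sum_mul_sum _ _ _ _ (fun p q => (hV44 p q).1)]
      have h1 : (∑ p : Fin M × Fin M, ∑ q : Fin M × Fin M,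
          ((-(μ k) * Ψm i p.1 * uhat p.2) * (-(μ k) * Ψm j q.1 * uhat q.2))
          * ∫ ω, W k ω p.1 p.2 * W k ω q.1 q.2 ∂P)
          = ∑ p : Fin M × Fin M, ∑ q : Fin M × Fin M,
            ((-(μ k) * Ψm i p.1 * uhat p.2) * (-(μ k) * Ψm j q.1 * uhat q.2)) * Km p q :=
        Finset.sum_congr rfl fun p _ => Finset.sum_congr rfl fun q _ => by
          rw [(hV44 p q).2]
      rw [h1]
      exact L4Aux2.block_pp Ψm Nm i j _ _ _ (-(μ k)) (-(μ k)) uhat uhat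
        (fun p => by ring) (fun q => by ring)
        (fun a b => by
          rw [hNm]
          simp only [Matrix.of_apply]
          exact Finset.sum_congr rfl fun l _ => Finset.sum_congr rfl fun m' _ => by ring)
    -- zero blocks
    have hB12 : ∫ ω, (∑ l, (1 - μ k • (Ψm * A)) i l * e (k - 1) ω l)
        * (∑ q : Fin M × Fin M, (-(μ k) * Ψm j q.1) * (W k ω q.1 q.2 * e (k - 1) ω q.2)) ∂P
        = 0 := by
      rw [L4Aux.integral_sum_mul_sum _ _ _ _ (fun l q => (hV12 l q).1)]
      exact Finset.sum_eq_zero fun l _ => Finset.sum_eq_zero fun q _ => by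
        rw [(hV12 l q).2, mul_zero]
    have hB13 : ∫ ω, (∑ l, (1 - μ k • (Ψm * A)) i l * e (k - 1) ω l)
        * (∑ b, (μ k * Ψm j b) * θ k ω b) ∂P = 0 := by
      rw [L4Aux.integral_sum_mul_sum _ _ _ _ (fun l b => (hV13 l b).1)]
      exact Finset.sum_eq_zero fun l _ => Finset.sum_eq_zero fun b _ => by
        rw [(hV13 l b).2, mul_zero]
    have hB14 : ∫ ω, (∑ l, (1 - μ k • (Ψm * A)) i l * e (k - 1) ω l)
        * (∑ q : Fin M × Fin M, (-(μ k) * Ψm j q.1 * uhat q.2) * (W k ω q.1 q.2)) ∂P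
        = 0 := by
      rw [L4Aux.integral_sum_mul_sum _ _ _ _ (fun l q => (hV14 l q).1)]
      exact Finset.sum_eq_zero fun l _ => Finset.sum_eq_zero fun q _ => by
        rw [(hV14 l q).2, mul_zero]
    have hB21 : ∫ ω, (∑ p : Fin M × Fin M, (-(μ k) * Ψm i p.1)
          * (W k ω p.1 p.2 * e (k - 1) ω p.2))
        * (∑ l, (1 - μ k • (Ψm * A)) j l * e (k - 1) ω l) ∂P = 0 := by
      rw [L4Aux.integral_sum_mul_sum _ _ _ _ (fun p l => (hV21 p l).1)]
      exact Finset.sum_eq_zero fun p _ => Finset.sum_eq_zero fun l _ => by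
        rw [(hV21 p l).2, mul_zero]
    have hB31 : ∫ ω, (∑ a, (μ k * Ψm i a) * θ k ω a)
        * (∑ l, (1 - μ k • (Ψm * A)) j l * e (k - 1) ω l) ∂P = 0 := by
      rw [L4Aux.integral_sum_mul_sum _ _ _ _ (fun a l => (hV31 a l).1)]
      exact Finset.sum_eq_zero fun a _ => Finset.sum_eq_zero fun l _ => by
        rw [(hV31 a l).2, mul_zero]
    have hB41 : ∫ ω, (∑ p : Fin M × Fin M, (-(μ k) * Ψm i p.1 * uhat p.2) * (W k ω p.1 p.2))
        * (∑ l, (1 - μ k • (Ψm * A)) j l * e (k - 1) ω l) ∂P = 0 := by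
      rw [L4Aux.integral_sum_mul_sum _ _ _ _ (fun p l => (hV41 p l).1)]
      exact Finset.sum_eq_zero fun p _ => Finset.sum_eq_zero fun l _ => by
        rw [(hV41 p l).2, mul_zero]
    -- integrability of the sixteen summands
    have hIS11 : Integrable (fun ω => (∑ l, (1 - μ k • (Ψm * A)) i l * e (k - 1) ω l)
        * (∑ l, (1 - μ k • (Ψm * A)) j l * e (k - 1) ω l)) P := L4Aux.integrable_sum_mul_sum (P := P)
      (fun l => (1 - μ k • (Ψm * A)) i l) (fun l => (1 - μ k • (Ψm * A)) j l)
      _ _ (fun a b => (hV11 a b).1)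
    have hIS12 : Integrable (fun ω => (∑ l, (1 - μ k • (Ψm * A)) i l * e (k - 1) ω l)
        * (∑ p : Fin M × Fin M, (-(μ k) * Ψm j p.1) * (W k ω p.1 p.2 * e (k - 1) ω p.2))) P := L4Aux.integrable_sum_mul_sum (P := P)
      (fun l => (1 - μ k • (Ψm * A)) i l) (fun q : Fin M × Fin M => -(μ k) * Ψm j q.1)
      _ _ (fun a b => (hV12 a b).1)
    have hIS13 : Integrable (fun ω => (∑ l, (1 - μ k • (Ψm * A)) i l * e (k - 1) ω l)
        * (∑ a, (μ k * Ψm j a) * θ k ω a)) P := L4Aux.integrable_sum_mul_sum (P := P)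
      (fun l => (1 - μ k • (Ψm * A)) i l) (fun b => μ k * Ψm j b)
      _ _ (fun a b => (hV13 a b).1)
    have hIS14 : Integrable (fun ω => (∑ l, (1 - μ k • (Ψm * A)) i l * e (k - 1) ω l)
        * (∑ p : Fin M × Fin M, (-(μ k) * Ψm j p.1 * uhat p.2) * (W k ω p.1 p.2))) P := L4Aux.integrable_sum_mul_sum (P := P)
      (fun l => (1 - μ k • (Ψm * A)) i l)
      (fun q : Fin M × Fin M => -(μ k) * Ψm j q.1 * uhat q.2)
      _ _ (fun a b => (hV14 a b).1)
    have hIS21 : Integrable (fun ω => (∑ p : Fin M × Fin M, (-(μ k) * Ψm i p.1) * (W k ω p.1 p.2 * e (k - 1) ω p.2))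
        * (∑ l, (1 - μ k • (Ψm * A)) j l * e (k - 1) ω l)) P := L4Aux.integrable_sum_mul_sum (P := P)
      (fun p : Fin M × Fin M => -(μ k) * Ψm i p.1)
      (fun l => (1 - μ k • (Ψm * A)) j l) _ _ (fun a b => (hV21 a b).1)
    have hIS22 : Integrable (fun ω => (∑ p : Fin M × Fin M, (-(μ k) * Ψm i p.1) * (W k ω p.1 p.2 * e (k - 1) ω p.2))
        * (∑ p : Fin M × Fin M, (-(μ k) * Ψm j p.1) * (W k ω p.1 p.2 * e (k - 1) ω p.2))) P := L4Aux.integrable_sum_mul_sum (P := P)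
      (fun p : Fin M × Fin M => -(μ k) * Ψm i p.1)
      (fun q : Fin M × Fin M => -(μ k) * Ψm j q.1) _ _ (fun a b => (hV22 a b).1)
    have hIS23 : Integrable (fun ω => (∑ p : Fin M × Fin M, (-(μ k) * Ψm i p.1) * (W k ω p.1 p.2 * e (k - 1) ω p.2))
        * (∑ a, (μ k * Ψm j a) * θ k ω a)) P := L4Aux.integrable_sum_mul_sum (P := P)
      (fun p : Fin M × Fin M => -(μ k) * Ψm i p.1)
      (fun b => μ k * Ψm j b) _ _ (fun a b => (hV23 a b).1)
    have hIS24 : Integrable (fun ω => (∑ p : Fin M × Fin M, (-(μ k) * Ψm i p.1) * (W k ω p.1 p.2 * e (k - 1) ω p.2))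
        * (∑ p : Fin M × Fin M, (-(μ k) * Ψm j p.1 * uhat p.2) * (W k ω p.1 p.2))) P := L4Aux.integrable_sum_mul_sum (P := P)
      (fun p : Fin M × Fin M => -(μ k) * Ψm i p.1)
      (fun q : Fin M × Fin M => -(μ k) * Ψm j q.1 * uhat q.2) _ _ (fun a b => (hV24 a b).1)
    have hIS31 : Integrable (fun ω => (∑ a, (μ k * Ψm i a) * θ k ω a)
        * (∑ l, (1 - μ k • (Ψm * A)) j l * e (k - 1) ω l)) P := L4Aux.integrable_sum_mul_sum (P := P)
      (fun a => μ k * Ψm i a) (fun l => (1 - μ k • (Ψm * A)) j l)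
      _ _ (fun a b => (hV31 a b).1)
    have hIS32 : Integrable (fun ω => (∑ a, (μ k * Ψm i a) * θ k ω a)
        * (∑ p : Fin M × Fin M, (-(μ k) * Ψm j p.1) * (W k ω p.1 p.2 * e (k - 1) ω p.2))) P := L4Aux.integrable_sum_mul_sum (P := P)
      (fun a => μ k * Ψm i a) (fun q : Fin M × Fin M => -(μ k) * Ψm j q.1)
      _ _ (fun a b => (hV32 a b).1)
    have hIS33 : Integrable (fun ω => (∑ a, (μ k * Ψm i a) * θ k ω a)
        * (∑ a, (μ k * Ψm j a) * θ k ω a)) P := L4Aux.integrable_sum_mul_sum (P := P)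
      (fun a => μ k * Ψm i a) (fun b => μ k * Ψm j b) _ _ (fun a b => (hV33 a b).1)
    have hIS34 : Integrable (fun ω => (∑ a, (μ k * Ψm i a) * θ k ω a)
        * (∑ p : Fin M × Fin M, (-(μ k) * Ψm j p.1 * uhat p.2) * (W k ω p.1 p.2))) P := L4Aux.integrable_sum_mul_sum (P := P)
      (fun a => μ k * Ψm i a)
      (fun q : Fin M × Fin M => -(μ k) * Ψm j q.1 * uhat q.2) _ _ (fun a b => (hV34 a b).1)
    have hIS41 : Integrable (fun ω => (∑ p : Fin M × Fin M, (-(μ k) * Ψm i p.1 * uhat p.2) * (W k ω p.1 p.2))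
        * (∑ l, (1 - μ k • (Ψm * A)) j l * e (k - 1) ω l)) P := L4Aux.integrable_sum_mul_sum (P := P)
      (fun p : Fin M × Fin M => -(μ k) * Ψm i p.1 * uhat p.2)
      (fun l => (1 - μ k • (Ψm * A)) j l) _ _ (fun a b => (hV41 a b).1)
    have hIS42 : Integrable (fun ω => (∑ p : Fin M × Fin M, (-(μ k) * Ψm i p.1 * uhat p.2) * (W k ω p.1 p.2))
        * (∑ p : Fin M × Fin M, (-(μ k) * Ψm j p.1) * (W k ω p.1 p.2 * e (k - 1) ω p.2))) P := L4Aux.integrable_sum_mul_sum (P := P)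
      (fun p : Fin M × Fin M => -(μ k) * Ψm i p.1 * uhat p.2)
      (fun q : Fin M × Fin M => -(μ k) * Ψm j q.1) _ _ (fun a b => (hV42 a b).1)
    have hIS43 : Integrable (fun ω => (∑ p : Fin M × Fin M, (-(μ k) * Ψm i p.1 * uhat p.2) * (W k ω p.1 p.2))
        * (∑ a, (μ k * Ψm j a) * θ k ω a)) P := L4Aux.integrable_sum_mul_sum (P := P)
      (fun p : Fin M × Fin M => -(μ k) * Ψm i p.1 * uhat p.2)
      (fun b => μ k * Ψm j b) _ _ (fun a b => (hV43 a b).1)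
    have hIS44 : Integrable (fun ω => (∑ p : Fin M × Fin M, (-(μ k) * Ψm i p.1 * uhat p.2) * (W k ω p.1 p.2))
        * (∑ p : Fin M × Fin M, (-(μ k) * Ψm j p.1 * uhat p.2) * (W k ω p.1 p.2))) P := L4Aux.integrable_sum_mul_sum (P := P)
      (fun p : Fin M × Fin M => -(μ k) * Ψm i p.1 * uhat p.2)
      (fun q : Fin M × Fin M => -(μ k) * Ψm j q.1 * uhat q.2) _ _ (fun a b => (hV44 a b).1)
    -- split the integral of the sixteen-term sum
    have hL : Emat P (fun ω => vecMulVec (e k ω) (e k ω)) i j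
        = ∫ ω, e k ω i * e k ω j ∂P := by
      simp [Emat, Matrix.vecMulVec_apply]
    rw [hL, hptw]
    have c2 : Integrable (fun ω => (∑ l, (1 - μ k • (Ψm * A)) i l * e (k - 1) ω l) * (∑ l, (1 - μ k • (Ψm * A)) j l * e (k - 1) ω l)
        + (∑ l, (1 - μ k • (Ψm * A)) i l * e (k - 1) ω l) * (∑ p : Fin M × Fin M, (-(μ k) * Ψm j p.1) * (W k ω p.1 p.2 * e (k - 1) ω p.2))) P := hIS11.add hIS12
    have c3 : Integrable (fun ω => (∑ l, (1 - μ k • (Ψm * A)) i l * e (k - 1) ω l) * (∑ l, (1 - μ k • (Ψm * A)) j l * e (k - 1) ω l)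
        + (∑ l, (1 - μ k • (Ψm * A)) i l * e (k - 1) ω l) * (∑ p : Fin M × Fin M, (-(μ k) * Ψm j p.1) * (W k ω p.1 p.2 * e (k - 1) ω p.2))
        + (∑ l, (1 - μ k • (Ψm * A)) i l * e (k - 1) ω l) * (∑ a, (μ k * Ψm j a) * θ k ω a)) P := c2.add hIS13
    have c4 : Integrable (fun ω => (∑ l, (1 - μ k • (Ψm * A)) i l * e (k - 1) ω l) * (∑ l, (1 - μ k • (Ψm * A)) j l * e (k - 1) ω l)
        + (∑ l, (1 - μ k • (Ψm * A)) i l * e (k - 1) ω l) * (∑ p : Fin M × Fin M, (-(μ k) * Ψm j p.1) * (W k ω p.1 p.2 * e (k - 1) ω p.2))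
        + (∑ l, (1 - μ k • (Ψm * A)) i l * e (k - 1) ω l) * (∑ a, (μ k * Ψm j a) * θ k ω a)
        + (∑ l, (1 - μ k • (Ψm * A)) i l * e (k - 1) ω l) * (∑ p : Fin M × Fin M, (-(μ k) * Ψm j p.1 * uhat p.2) * (W k ω p.1 p.2))) P := c3.add hIS14
    have c5 : Integrable (fun ω => (∑ l, (1 - μ k • (Ψm * A)) i l * e (k - 1) ω l) * (∑ l, (1 - μ k • (Ψm * A)) j l * e (k - 1) ω l)
        + (∑ l, (1 - μ k • (Ψm * A)) i l * e (k - 1) ω l) * (∑ p : Fin M × Fin M, (-(μ k) * Ψm j p.1) * (W k ω p.1 p.2 * e (k - 1) ω p.2))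
        + (∑ l, (1 - μ k • (Ψm * A)) i l * e (k - 1) ω l) * (∑ a, (μ k * Ψm j a) * θ k ω a)
        + (∑ l, (1 - μ k • (Ψm * A)) i l * e (k - 1) ω l) * (∑ p : Fin M × Fin M, (-(μ k) * Ψm j p.1 * uhat p.2) * (W k ω p.1 p.2))
        + (∑ p : Fin M × Fin M, (-(μ k) * Ψm i p.1) * (W k ω p.1 p.2 * e (k - 1) ω p.2)) * (∑ l, (1 - μ k • (Ψm * A)) j l * e (k - 1) ω l)) P := c4.add hIS21
    have c6 : Integrable (fun ω => (∑ l, (1 - μ k • (Ψm * A)) i l * e (k - 1) ω l) * (∑ l, (1 - μ k • (Ψm * A)) j l * e (k - 1) ω l)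
        + (∑ l, (1 - μ k • (Ψm * A)) i l * e (k - 1) ω l) * (∑ p : Fin M × Fin M, (-(μ k) * Ψm j p.1) * (W k ω p.1 p.2 * e (k - 1) ω p.2))
        + (∑ l, (1 - μ k • (Ψm * A)) i l * e (k - 1) ω l) * (∑ a, (μ k * Ψm j a) * θ k ω a)
        + (∑ l, (1 - μ k • (Ψm * A)) i l * e (k - 1) ω l) * (∑ p : Fin M × Fin M, (-(μ k) * Ψm j p.1 * uhat p.2) * (W k ω p.1 p.2))
        + (∑ p : Fin M × Fin M, (-(μ k) * Ψm i p.1) * (W k ω p.1 p.2 * e (k - 1) ω p.2)) * (∑ l, (1 - μ k • (Ψm * A)) j l * e (k - 1) ω l)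
        + (∑ p : Fin M × Fin M, (-(μ k) * Ψm i p.1) * (W k ω p.1 p.2 * e (k - 1) ω p.2)) * (∑ p : Fin M × Fin M, (-(μ k) * Ψm j p.1) * (W k ω p.1 p.2 * e (k - 1) ω p.2))) P := c5.add hIS22
    have c7 : Integrable (fun ω => (∑ l, (1 - μ k • (Ψm * A)) i l * e (k - 1) ω l) * (∑ l, (1 - μ k • (Ψm * A)) j l * e (k - 1) ω l)
        + (∑ l, (1 - μ k • (Ψm * A)) i l * e (k - 1) ω l) * (∑ p : Fin M × Fin M, (-(μ k) * Ψm j p.1) * (W k ω p.1 p.2 * e (k - 1) ω p.2))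
        + (∑ l, (1 - μ k • (Ψm * A)) i l * e (k - 1) ω l) * (∑ a, (μ k * Ψm j a) * θ k ω a)
        + (∑ l, (1 - μ k • (Ψm * A)) i l * e (k - 1) ω l) * (∑ p : Fin M × Fin M, (-(μ k) * Ψm j p.1 * uhat p.2) * (W k ω p.1 p.2))
        + (∑ p : Fin M × Fin M, (-(μ k) * Ψm i p.1) * (W k ω p.1 p.2 * e (k - 1) ω p.2)) * (∑ l, (1 - μ k • (Ψm * A)) j l * e (k - 1) ω l)
        + (∑ p : Fin M × Fin M, (-(μ k) * Ψm i p.1) * (W k ω p.1 p.2 * e (k - 1) ω p.2)) * (∑ p : Fin M × Fin M, (-(μ k) * Ψm j p.1) * (W k ω p.1 p.2 * e (k - 1) ω p.2))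
        + (∑ p : Fin M × Fin M, (-(μ k) * Ψm i p.1) * (W k ω p.1 p.2 * e (k - 1) ω p.2)) * (∑ a, (μ k * Ψm j a) * θ k ω a)) P := c6.add hIS23
    have c8 : Integrable (fun ω => (∑ l, (1 - μ k • (Ψm * A)) i l * e (k - 1) ω l) * (∑ l, (1 - μ k • (Ψm * A)) j l * e (k - 1) ω l)
        + (∑ l, (1 - μ k • (Ψm * A)) i l * e (k - 1) ω l) * (∑ p : Fin M × Fin M, (-(μ k) * Ψm j p.1) * (W k ω p.1 p.2 * e (k - 1) ω p.2))
        + (∑ l, (1 - μ k • (Ψm * A)) i l * e (k - 1) ω l) * (∑ a, (μ k * Ψm j a) * θ k ω a)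
        + (∑ l, (1 - μ k • (Ψm * A)) i l * e (k - 1) ω l) * (∑ p : Fin M × Fin M, (-(μ k) * Ψm j p.1 * uhat p.2) * (W k ω p.1 p.2))
        + (∑ p : Fin M × Fin M, (-(μ k) * Ψm i p.1) * (W k ω p.1 p.2 * e (k - 1) ω p.2)) * (∑ l, (1 - μ k • (Ψm * A)) j l * e (k - 1) ω l)
        + (∑ p : Fin M × Fin M, (-(μ k) * Ψm i p.1) * (W k ω p.1 p.2 * e (k - 1) ω p.2)) * (∑ p : Fin M × Fin M, (-(μ k) * Ψm j p.1) * (W k ω p.1 p.2 * e (k - 1) ω p.2))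
        + (∑ p : Fin M × Fin M, (-(μ k) * Ψm i p.1) * (W k ω p.1 p.2 * e (k - 1) ω p.2)) * (∑ a, (μ k * Ψm j a) * θ k ω a)
        + (∑ p : Fin M × Fin M, (-(μ k) * Ψm i p.1) * (W k ω p.1 p.2 * e (k - 1) ω p.2)) * (∑ p : Fin M × Fin M, (-(μ k) * Ψm j p.1 * uhat p.2) * (W k ω p.1 p.2))) P := c7.add hIS24
    have c9 : Integrable (fun ω => (∑ l, (1 - μ k • (Ψm * A)) i l * e (k - 1) ω l) * (∑ l, (1 - μ k • (Ψm * A)) j l * e (k - 1) ω l)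
        + (∑ l, (1 - μ k • (Ψm * A)) i l * e (k - 1) ω l) * (∑ p : Fin M × Fin M, (-(μ k) * Ψm j p.1) * (W k ω p.1 p.2 * e (k - 1) ω p.2))
        + (∑ l, (1 - μ k • (Ψm * A)) i l * e (k - 1) ω l) * (∑ a, (μ k * Ψm j a) * θ k ω a)
        + (∑ l, (1 - μ k • (Ψm * A)) i l * e (k - 1) ω l) * (∑ p : Fin M × Fin M, (-(μ k) * Ψm j p.1 * uhat p.2) * (W k ω p.1 p.2))
        + (∑ p : Fin M × Fin M, (-(μ k) * Ψm i p.1) * (W k ω p.1 p.2 * e (k - 1) ω p.2)) * (∑ l, (1 - μ k • (Ψm * A)) j l * e (k - 1) ω l)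
        + (∑ p : Fin M × Fin M, (-(μ k) * Ψm i p.1) * (W k ω p.1 p.2 * e (k - 1) ω p.2)) * (∑ p : Fin M × Fin M, (-(μ k) * Ψm j p.1) * (W k ω p.1 p.2 * e (k - 1) ω p.2))
        + (∑ p : Fin M × Fin M, (-(μ k) * Ψm i p.1) * (W k ω p.1 p.2 * e (k - 1) ω p.2)) * (∑ a, (μ k * Ψm j a) * θ k ω a)
        + (∑ p : Fin M × Fin M, (-(μ k) * Ψm i p.1) * (W k ω p.1 p.2 * e (k - 1) ω p.2)) * (∑ p : Fin M × Fin M, (-(μ k) * Ψm j p.1 * uhat p.2) * (W k ω p.1 p.2))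
        + (∑ a, (μ k * Ψm i a) * θ k ω a) * (∑ l, (1 - μ k • (Ψm * A)) j l * e (k - 1) ω l)) P := c8.add hIS31
    have c10 : Integrable (fun ω => (∑ l, (1 - μ k • (Ψm * A)) i l * e (k - 1) ω l) * (∑ l, (1 - μ k • (Ψm * A)) j l * e (k - 1) ω l)
        + (∑ l, (1 - μ k • (Ψm * A)) i l * e (k - 1) ω l) * (∑ p : Fin M × Fin M, (-(μ k) * Ψm j p.1) * (W k ω p.1 p.2 * e (k - 1) ω p.2))
        + (∑ l, (1 - μ k • (Ψm * A)) i l * e (k - 1) ω l) * (∑ a, (μ k * Ψm j a) * θ k ω a)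
        + (∑ l, (1 - μ k • (Ψm * A)) i l * e (k - 1) ω l) * (∑ p : Fin M × Fin M, (-(μ k) * Ψm j p.1 * uhat p.2) * (W k ω p.1 p.2))
        + (∑ p : Fin M × Fin M, (-(μ k) * Ψm i p.1) * (W k ω p.1 p.2 * e (k - 1) ω p.2)) * (∑ l, (1 - μ k • (Ψm * A)) j l * e (k - 1) ω l)
        + (∑ p : Fin M × Fin M, (-(μ k) * Ψm i p.1) * (W k ω p.1 p.2 * e (k - 1) ω p.2)) * (∑ p : Fin M × Fin M, (-(μ k) * Ψm j p.1) * (W k ω p.1 p.2 * e (k - 1) ω p.2))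
        + (∑ p : Fin M × Fin M, (-(μ k) * Ψm i p.1) * (W k ω p.1 p.2 * e (k - 1) ω p.2)) * (∑ a, (μ k * Ψm j a) * θ k ω a)
        + (∑ p : Fin M × Fin M, (-(μ k) * Ψm i p.1) * (W k ω p.1 p.2 * e (k - 1) ω p.2)) * (∑ p : Fin M × Fin M, (-(μ k) * Ψm j p.1 * uhat p.2) * (W k ω p.1 p.2))
        + (∑ a, (μ k * Ψm i a) * θ k ω a) * (∑ l, (1 - μ k • (Ψm * A)) j l * e (k - 1) ω l)
        + (∑ a, (μ k * Ψm i a) * θ k ω a) * (∑ p : Fin M × Fin M, (-(μ k) * Ψm j p.1) * (W k ω p.1 p.2 * e (k - 1) ω p.2))) P := c9.add hIS32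
    have c11 : Integrable (fun ω => (∑ l, (1 - μ k • (Ψm * A)) i l * e (k - 1) ω l) * (∑ l, (1 - μ k • (Ψm * A)) j l * e (k - 1) ω l)
        + (∑ l, (1 - μ k • (Ψm * A)) i l * e (k - 1) ω l) * (∑ p : Fin M × Fin M, (-(μ k) * Ψm j p.1) * (W k ω p.1 p.2 * e (k - 1) ω p.2))
        + (∑ l, (1 - μ k • (Ψm * A)) i l * e (k - 1) ω l) * (∑ a, (μ k * Ψm j a) * θ k ω a)
        + (∑ l, (1 - μ k • (Ψm * A)) i l * e (k - 1) ω l) * (∑ p : Fin M × Fin M, (-(μ k) * Ψm j p.1 * uhat p.2) * (W k ω p.1 p.2))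
        + (∑ p : Fin M × Fin M, (-(μ k) * Ψm i p.1) * (W k ω p.1 p.2 * e (k - 1) ω p.2)) * (∑ l, (1 - μ k • (Ψm * A)) j l * e (k - 1) ω l)
        + (∑ p : Fin M × Fin M, (-(μ k) * Ψm i p.1) * (W k ω p.1 p.2 * e (k - 1) ω p.2)) * (∑ p : Fin M × Fin M, (-(μ k) * Ψm j p.1) * (W k ω p.1 p.2 * e (k - 1) ω p.2))
        + (∑ p : Fin M × Fin M, (-(μ k) * Ψm i p.1) * (W k ω p.1 p.2 * e (k - 1) ω p.2)) * (∑ a, (μ k * Ψm j a) * θ k ω a)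
        + (∑ p : Fin M × Fin M, (-(μ k) * Ψm i p.1) * (W k ω p.1 p.2 * e (k - 1) ω p.2)) * (∑ p : Fin M × Fin M, (-(μ k) * Ψm j p.1 * uhat p.2) * (W k ω p.1 p.2))
        + (∑ a, (μ k * Ψm i a) * θ k ω a) * (∑ l, (1 - μ k • (Ψm * A)) j l * e (k - 1) ω l)
        + (∑ a, (μ k * Ψm i a) * θ k ω a) * (∑ p : Fin M × Fin M, (-(μ k) * Ψm j p.1) * (W k ω p.1 p.2 * e (k - 1) ω p.2))
        + (∑ a, (μ k * Ψm i a) * θ k ω a) * (∑ a, (μ k * Ψm j a) * θ k ω a)) P := c10.add hIS33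
    have c12 : Integrable (fun ω => (∑ l, (1 - μ k • (Ψm * A)) i l * e (k - 1) ω l) * (∑ l, (1 - μ k • (Ψm * A)) j l * e (k - 1) ω l)
        + (∑ l, (1 - μ k • (Ψm * A)) i l * e (k - 1) ω l) * (∑ p : Fin M × Fin M, (-(μ k) * Ψm j p.1) * (W k ω p.1 p.2 * e (k - 1) ω p.2))
        + (∑ l, (1 - μ k • (Ψm * A)) i l * e (k - 1) ω l) * (∑ a, (μ k * Ψm j a) * θ k ω a)
        + (∑ l, (1 - μ k • (Ψm * A)) i l * e (k - 1) ω l) * (∑ p : Fin M × Fin M, (-(μ k) * Ψm j p.1 * uhat p.2) * (W k ω p.1 p.2))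
        + (∑ p : Fin M × Fin M, (-(μ k) * Ψm i p.1) * (W k ω p.1 p.2 * e (k - 1) ω p.2)) * (∑ l, (1 - μ k • (Ψm * A)) j l * e (k - 1) ω l)
        + (∑ p : Fin M × Fin M, (-(μ k) * Ψm i p.1) * (W k ω p.1 p.2 * e (k - 1) ω p.2)) * (∑ p : Fin M × Fin M, (-(μ k) * Ψm j p.1) * (W k ω p.1 p.2 * e (k - 1) ω p.2))
        + (∑ p : Fin M × Fin M, (-(μ k) * Ψm i p.1) * (W k ω p.1 p.2 * e (k - 1) ω p.2)) * (∑ a, (μ k * Ψm j a) * θ k ω a)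
        + (∑ p : Fin M × Fin M, (-(μ k) * Ψm i p.1) * (W k ω p.1 p.2 * e (k - 1) ω p.2)) * (∑ p : Fin M × Fin M, (-(μ k) * Ψm j p.1 * uhat p.2) * (W k ω p.1 p.2))
        + (∑ a, (μ k * Ψm i a) * θ k ω a) * (∑ l, (1 - μ k • (Ψm * A)) j l * e (k - 1) ω l)
        + (∑ a, (μ k * Ψm i a) * θ k ω a) * (∑ p : Fin M × Fin M, (-(μ k) * Ψm j p.1) * (W k ω p.1 p.2 * e (k - 1) ω p.2))
        + (∑ a, (μ k * Ψm i a) * θ k ω a) * (∑ a, (μ k * Ψm j a) * θ k ω a)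
        + (∑ a, (μ k * Ψm i a) * θ k ω a) * (∑ p : Fin M × Fin M, (-(μ k) * Ψm j p.1 * uhat p.2) * (W k ω p.1 p.2))) P := c11.add hIS34
    have c13 : Integrable (fun ω => (∑ l, (1 - μ k • (Ψm * A)) i l * e (k - 1) ω l) * (∑ l, (1 - μ k • (Ψm * A)) j l * e (k - 1) ω l)
        + (∑ l, (1 - μ k • (Ψm * A)) i l * e (k - 1) ω l) * (∑ p : Fin M × Fin M, (-(μ k) * Ψm j p.1) * (W k ω p.1 p.2 * e (k - 1) ω p.2))
        + (∑ l, (1 - μ k • (Ψm * A)) i l * e (k - 1) ω l) * (∑ a, (μ k * Ψm j a) * θ k ω a)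
        + (∑ l, (1 - μ k • (Ψm * A)) i l * e (k - 1) ω l) * (∑ p : Fin M × Fin M, (-(μ k) * Ψm j p.1 * uhat p.2) * (W k ω p.1 p.2))
        + (∑ p : Fin M × Fin M, (-(μ k) * Ψm i p.1) * (W k ω p.1 p.2 * e (k - 1) ω p.2)) * (∑ l, (1 - μ k • (Ψm * A)) j l * e (k - 1) ω l)
        + (∑ p : Fin M × Fin M, (-(μ k) * Ψm i p.1) * (W k ω p.1 p.2 * e (k - 1) ω p.2)) * (∑ p : Fin M × Fin M, (-(μ k) * Ψm j p.1) * (W k ω p.1 p.2 * e (k - 1) ω p.2))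
        + (∑ p : Fin M × Fin M, (-(μ k) * Ψm i p.1) * (W k ω p.1 p.2 * e (k - 1) ω p.2)) * (∑ a, (μ k * Ψm j a) * θ k ω a)
        + (∑ p : Fin M × Fin M, (-(μ k) * Ψm i p.1) * (W k ω p.1 p.2 * e (k - 1) ω p.2)) * (∑ p : Fin M × Fin M, (-(μ k) * Ψm j p.1 * uhat p.2) * (W k ω p.1 p.2))
        + (∑ a, (μ k * Ψm i a) * θ k ω a) * (∑ l, (1 - μ k • (Ψm * A)) j l * e (k - 1) ω l)
        + (∑ a, (μ k * Ψm i a) * θ k ω a) * (∑ p : Fin M × Fin M, (-(μ k) * Ψm j p.1) * (W k ω p.1 p.2 * e (k - 1) ω p.2))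
        + (∑ a, (μ k * Ψm i a) * θ k ω a) * (∑ a, (μ k * Ψm j a) * θ k ω a)
        + (∑ a, (μ k * Ψm i a) * θ k ω a) * (∑ p : Fin M × Fin M, (-(μ k) * Ψm j p.1 * uhat p.2) * (W k ω p.1 p.2))
        + (∑ p : Fin M × Fin M, (-(μ k) * Ψm i p.1 * uhat p.2) * (W k ω p.1 p.2)) * (∑ l, (1 - μ k • (Ψm * A)) j l * e (k - 1) ω l)) P := c12.add hIS41
    have c14 : Integrable (fun ω => (∑ l, (1 - μ k • (Ψm * A)) i l * e (k - 1) ω l) * (∑ l, (1 - μ k • (Ψm * A)) j l * e (k - 1) ω l)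
        + (∑ l, (1 - μ k • (Ψm * A)) i l * e (k - 1) ω l) * (∑ p : Fin M × Fin M, (-(μ k) * Ψm j p.1) * (W k ω p.1 p.2 * e (k - 1) ω p.2))
        + (∑ l, (1 - μ k • (Ψm * A)) i l * e (k - 1) ω l) * (∑ a, (μ k * Ψm j a) * θ k ω a)
        + (∑ l, (1 - μ k • (Ψm * A)) i l * e (k - 1) ω l) * (∑ p : Fin M × Fin M, (-(μ k) * Ψm j p.1 * uhat p.2) * (W k ω p.1 p.2))
        + (∑ p : Fin M × Fin M, (-(μ k) * Ψm i p.1) * (W k ω p.1 p.2 * e (k - 1) ω p.2)) * (∑ l, (1 - μ k • (Ψm * A)) j l * e (k - 1) ω l)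
        + (∑ p : Fin M × Fin M, (-(μ k) * Ψm i p.1) * (W k ω p.1 p.2 * e (k - 1) ω p.2)) * (∑ p : Fin M × Fin M, (-(μ k) * Ψm j p.1) * (W k ω p.1 p.2 * e (k - 1) ω p.2))
        + (∑ p : Fin M × Fin M, (-(μ k) * Ψm i p.1) * (W k ω p.1 p.2 * e (k - 1) ω p.2)) * (∑ a, (μ k * Ψm j a) * θ k ω a)
        + (∑ p : Fin M × Fin M, (-(μ k) * Ψm i p.1) * (W k ω p.1 p.2 * e (k - 1) ω p.2)) * (∑ p : Fin M × Fin M, (-(μ k) * Ψm j p.1 * uhat p.2) * (W k ω p.1 p.2))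
        + (∑ a, (μ k * Ψm i a) * θ k ω a) * (∑ l, (1 - μ k • (Ψm * A)) j l * e (k - 1) ω l)
        + (∑ a, (μ k * Ψm i a) * θ k ω a) * (∑ p : Fin M × Fin M, (-(μ k) * Ψm j p.1) * (W k ω p.1 p.2 * e (k - 1) ω p.2))
        + (∑ a, (μ k * Ψm i a) * θ k ω a) * (∑ a, (μ k * Ψm j a) * θ k ω a)
        + (∑ a, (μ k * Ψm i a) * θ k ω a) * (∑ p : Fin M × Fin M, (-(μ k) * Ψm j p.1 * uhat p.2) * (W k ω p.1 p.2))
        + (∑ p : Fin M × Fin M, (-(μ k) * Ψm i p.1 * uhat p.2) * (W k ω p.1 p.2)) * (∑ l, (1 - μ k • (Ψm * A)) j l * e (k - 1) ω l)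
        + (∑ p : Fin M × Fin M, (-(μ k) * Ψm i p.1 * uhat p.2) * (W k ω p.1 p.2)) * (∑ p : Fin M × Fin M, (-(μ k) * Ψm j p.1) * (W k ω p.1 p.2 * e (k - 1) ω p.2))) P := c13.add hIS42
    have c15 : Integrable (fun ω => (∑ l, (1 - μ k • (Ψm * A)) i l * e (k - 1) ω l) * (∑ l, (1 - μ k • (Ψm * A)) j l * e (k - 1) ω l)
        + (∑ l, (1 - μ k • (Ψm * A)) i l * e (k - 1) ω l) * (∑ p : Fin M × Fin M, (-(μ k) * Ψm j p.1) * (W k ω p.1 p.2 * e (k - 1) ω p.2))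
        + (∑ l, (1 - μ k • (Ψm * A)) i l * e (k - 1) ω l) * (∑ a, (μ k * Ψm j a) * θ k ω a)
        + (∑ l, (1 - μ k • (Ψm * A)) i l * e (k - 1) ω l) * (∑ p : Fin M × Fin M, (-(μ k) * Ψm j p.1 * uhat p.2) * (W k ω p.1 p.2))
        + (∑ p : Fin M × Fin M, (-(μ k) * Ψm i p.1) * (W k ω p.1 p.2 * e (k - 1) ω p.2)) * (∑ l, (1 - μ k • (Ψm * A)) j l * e (k - 1) ω l)
        + (∑ p : Fin M × Fin M, (-(μ k) * Ψm i p.1) * (W k ω p.1 p.2 * e (k - 1) ω p.2)) * (∑ p : Fin M × Fin M, (-(μ k) * Ψm j p.1) * (W k ω p.1 p.2 * e (k - 1) ω p.2))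
        + (∑ p : Fin M × Fin M, (-(μ k) * Ψm i p.1) * (W k ω p.1 p.2 * e (k - 1) ω p.2)) * (∑ a, (μ k * Ψm j a) * θ k ω a)
        + (∑ p : Fin M × Fin M, (-(μ k) * Ψm i p.1) * (W k ω p.1 p.2 * e (k - 1) ω p.2)) * (∑ p : Fin M × Fin M, (-(μ k) * Ψm j p.1 * uhat p.2) * (W k ω p.1 p.2))
        + (∑ a, (μ k * Ψm i a) * θ k ω a) * (∑ l, (1 - μ k • (Ψm * A)) j l * e (k - 1) ω l)
        + (∑ a, (μ k * Ψm i a) * θ k ω a) * (∑ p : Fin M × Fin M, (-(μ k) * Ψm j p.1) * (W k ω p.1 p.2 * e (k - 1) ω p.2))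
        + (∑ a, (μ k * Ψm i a) * θ k ω a) * (∑ a, (μ k * Ψm j a) * θ k ω a)
        + (∑ a, (μ k * Ψm i a) * θ k ω a) * (∑ p : Fin M × Fin M, (-(μ k) * Ψm j p.1 * uhat p.2) * (W k ω p.1 p.2))
        + (∑ p : Fin M × Fin M, (-(μ k) * Ψm i p.1 * uhat p.2) * (W k ω p.1 p.2)) * (∑ l, (1 - μ k • (Ψm * A)) j l * e (k - 1) ω l)
        + (∑ p : Fin M × Fin M, (-(μ k) * Ψm i p.1 * uhat p.2) * (W k ω p.1 p.2)) * (∑ p : Fin M × Fin M, (-(μ k) * Ψm j p.1) * (W k ω p.1 p.2 * e (k - 1) ω p.2))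
        + (∑ p : Fin M × Fin M, (-(μ k) * Ψm i p.1 * uhat p.2) * (W k ω p.1 p.2)) * (∑ a, (μ k * Ψm j a) * θ k ω a)) P := c14.add hIS43
    rw [integral_add c15 hIS44, integral_add c14 hIS43, integral_add c13 hIS42,
      integral_add c12 hIS41, integral_add c11 hIS34, integral_add c10 hIS33,
      integral_add c9 hIS32, integral_add c8 hIS31, integral_add c7 hIS24,
      integral_add c6 hIS23, integral_add c5 hIS22, integral_add c4 hIS21,
      integral_add c3 hIS14, integral_add c2 hIS13, integral_add hIS11 hIS12]
    rw [hB11, hB12, hB13, hB14, hB21, hB22, hB23, hB24, hB31, hB32, hB33, hB34,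
      hB41, hB42, hB43, hB44]
    simp only [hRRm, Matrix.mul_sub, Matrix.mul_add, Matrix.sub_mul, Matrix.add_mul,
      Matrix.add_apply, Matrix.sub_apply, Matrix.smul_apply, smul_eq_mul]
    ring
  -- norms of the covariance kernels
  have hσΩΩv : frobNorm Km = σΩΩ2 := by rw [hKm]; exact hσΩΩ k hk
  have hσΩθv : frobNorm Jm = σΩθ2 := by rw [hJm]; exact hσΩθ k hk
  have hσθθv : frobNorm Θmm = σθθ2 := by rw [hΘmm]; exact hσθθ k hk
  have hσΩΩ0 : (0:ℝ) ≤ σΩΩ2 := hσΩΩv ▸ L4Aux.frobNorm_nonneg Km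
  have hσΩθ0 : (0:ℝ) ≤ σΩθ2 := hσΩθv ▸ L4Aux.frobNorm_nonneg Jm
  -- kernel reindexing identities
  have hker2 : Real.sqrt (∑ pr : Fin M × Fin M, ∑ t : Fin M × Fin M,
      (Km (pr.1, t.1) (pr.2, t.2)) ^ 2) = frobNorm Km := by
    unfold frobNorm
    congr 1
    have e1 := L4Aux2.sum_pair_reorder
      (fun pr t : Fin M × Fin M => (Km (pr.1, t.1) (pr.2, t.2)) ^ 2)
    have e2 := L4Aux2.sum4_swap23 (fun a b l m' : Fin M => (Km (a, b) (l, m')) ^ 2)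
    have e3 := L4Aux2.sum_pair_reorder (fun p q : Fin M × Fin M => (Km p q) ^ 2)
    exact e1.trans (e2.trans e3.symm)
  have hker1 : Real.sqrt (∑ pr : Fin M × Fin M, ∑ l,
      (Jm (pr.1, l) pr.2) ^ 2) = frobNorm Jm := by
    unfold frobNorm
    congr 1
    have e1 := Fintype.sum_prod_type
      (f := fun pr : Fin M × Fin M => ∑ l, (Jm (pr.1, l) pr.2) ^ 2)
    have e2 := L4Aux2.sum3_swap23 (fun a b l : Fin M => (Jm (a, l) b) ^ 2)
    have e3 := Fintype.sum_prod_type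
      (f := fun p : Fin M × Fin M => ∑ b, (Jm p b) ^ 2)
    exact e1.trans (e2.trans e3.symm)
  have hker1b : Real.sqrt (∑ pr : Fin M × Fin M, ∑ l,
      (Jm (pr.2, l) pr.1) ^ 2) = frobNorm Jm := by
    unfold frobNorm
    congr 1
    have e1 := Fintype.sum_prod_type
      (f := fun pr : Fin M × Fin M => ∑ l, (Jm (pr.2, l) pr.1) ^ 2)
    have e2 := L4Aux2.sum3_swap12 (fun a b l : Fin M => (Jm (b, l) a) ^ 2)
    have e3 := L4Aux2.sum3_swap23 (fun b a l : Fin M => (Jm (b, l) a) ^ 2)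
    have e4 := Fintype.sum_prod_type
      (f := fun p : Fin M × Fin M => ∑ a, (Jm p a) ^ 2)
    exact e1.trans ((e2.trans e3).trans e4.symm)
  -- norms of the x-vectors
  have hxmv : Real.sqrt (∑ l, (mv l) ^ 2) = euclNorm mv := rfl
  have hxu : Real.sqrt (∑ l, (uhat l) ^ 2) = euclNorm uhat := rfl
  have hxS : Real.sqrt (∑ t : Fin M × Fin M, (Sm t.1 t.2) ^ 2) = frobNorm Sm := by
    unfold frobNorm
    congr 1
    exact Fintype.sum_prod_type (f := fun t : Fin M × Fin M => (Sm t.1 t.2) ^ 2)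
  have hprodsq : ∀ v w : Fin M → ℝ,
      Real.sqrt (∑ t : Fin M × Fin M, (v t.1 * w t.2) ^ 2)
        = Real.sqrt (∑ l, (v l) ^ 2) * Real.sqrt (∑ l, (w l) ^ 2) := by
    intro v w
    rw [← Real.sqrt_mul (by positivity)]
    congr 1
    calc ∑ t : Fin M × Fin M, (v t.1 * w t.2) ^ 2
        = ∑ l, ∑ m', (v l * w m') ^ 2 :=
          Fintype.sum_prod_type (f := fun t : Fin M × Fin M => (v t.1 * w t.2) ^ 2)
      _ = ∑ l, ∑ m', (v l) ^ 2 * (w m') ^ 2 :=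
          Finset.sum_congr rfl fun l _ => Finset.sum_congr rfl fun m' _ => by ring
      _ = (∑ l, (v l) ^ 2) * (∑ m', (w m') ^ 2) := by rw [← Finset.sum_mul_sum]
  -- the nine matrix norm bounds
  have hQb : frobNorm Qm ≤ σΩΩ2 * frobNorm Sm := by
    have h := L4Aux2.frobNorm_contract_le Qm
      (fun pr t : Fin M × Fin M => Km (pr.1, t.1) (pr.2, t.2)) (fun t : Fin M × Fin M => Sm t.1 t.2)
      (fun pr => by
        rw [hQm]
        simp only [Matrix.of_apply]
        exact (Fintype.sum_prod_type (f := fun t : Fin M × Fin M =>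
          Km (pr.1, t.1) (pr.2, t.2) * Sm t.1 t.2)).symm)
    rwa [hker2, hxS, hσΩΩv] at h
  have hU1b' : frobNorm U1m ≤ σΩθ2 * euclNorm mv := by
    have h := L4Aux2.frobNorm_contract_le U1m
      (fun pr l => Jm (pr.1, l) pr.2) mv
      (fun pr => by rw [hU1m]; simp only [Matrix.of_apply])
    rwa [hker1, hxmv, hσΩθv] at h
  have hU1bb : frobNorm U1bm ≤ σΩθ2 * euclNorm mv := by
    have h := L4Aux2.frobNorm_contract_le U1bm
      (fun pr l => Jm (pr.2, l) pr.1) mv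
      (fun pr => by rw [hU1bm]; simp only [Matrix.of_apply])
    rwa [hker1b, hxmv, hσΩθv] at h
  have hU2b' : frobNorm U2m ≤ σΩΩ2 * (euclNorm mv * euclNorm uhat) := by
    have h := L4Aux2.frobNorm_contract_le U2m
      (fun pr t : Fin M × Fin M => Km (pr.1, t.1) (pr.2, t.2)) (fun t : Fin M × Fin M => mv t.1 * uhat t.2)
      (fun pr => by
        rw [hU2m]
        simp only [Matrix.of_apply]
        calc ∑ l, ∑ m', (Km (pr.1, l) (pr.2, m') * mv l) * uhat m'
            = ∑ l, ∑ m', Km (pr.1, l) (pr.2, m') * (mv l * uhat m') :=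
              Finset.sum_congr rfl fun l _ => Finset.sum_congr rfl fun m' _ => by ring
          _ = ∑ t : Fin M × Fin M, Km (pr.1, t.1) (pr.2, t.2) * (mv t.1 * uhat t.2) :=
              (Fintype.sum_prod_type (f := fun t : Fin M × Fin M =>
                Km (pr.1, t.1) (pr.2, t.2) * (mv t.1 * uhat t.2))).symm)
    rwa [hker2, hprodsq mv uhat, hxmv, hxu, hσΩΩv] at h
  have hU2bb : frobNorm U2bm ≤ σΩΩ2 * (euclNorm uhat * euclNorm mv) := by
    have h := L4Aux2.frobNorm_contract_le U2bm
      (fun pr t : Fin M × Fin M => Km (pr.1, t.1) (pr.2, t.2)) (fun t : Fin M × Fin M => uhat t.1 * mv t.2)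
      (fun pr => by
        rw [hU2bm]
        simp only [Matrix.of_apply]
        calc ∑ l, ∑ m', (Km (pr.1, l) (pr.2, m') * mv m') * uhat l
            = ∑ l, ∑ m', Km (pr.1, l) (pr.2, m') * (uhat l * mv m') :=
              Finset.sum_congr rfl fun l _ => Finset.sum_congr rfl fun m' _ => by ring
          _ = ∑ t : Fin M × Fin M, Km (pr.1, t.1) (pr.2, t.2) * (uhat t.1 * mv t.2) :=
              (Fintype.sum_prod_type (f := fun t : Fin M × Fin M =>
                Km (pr.1, t.1) (pr.2, t.2) * (uhat t.1 * mv t.2))).symm)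
    rwa [hker2, hprodsq uhat mv, hxu, hxmv, hσΩΩv] at h
  have hLb' : frobNorm Lm ≤ σΩθ2 * euclNorm uhat := by
    have h := L4Aux2.frobNorm_contract_le Lm
      (fun pr l => Jm (pr.2, l) pr.1) uhat
      (fun pr => by rw [hLm]; simp only [Matrix.of_apply])
    rwa [hker1b, hxu, hσΩθv] at h
  have hLbb : frobNorm Lbm ≤ σΩθ2 * euclNorm uhat := by
    have h := L4Aux2.frobNorm_contract_le Lbm
      (fun pr l => Jm (pr.1, l) pr.2) uhat
      (fun pr => by rw [hLbm]; simp only [Matrix.of_apply])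
    rwa [hker1, hxu, hσΩθv] at h
  have hNb : frobNorm Nm ≤ σΩΩ2 * (euclNorm uhat * euclNorm uhat) := by
    have h := L4Aux2.frobNorm_contract_le Nm
      (fun pr t : Fin M × Fin M => Km (pr.1, t.1) (pr.2, t.2)) (fun t : Fin M × Fin M => uhat t.1 * uhat t.2)
      (fun pr => by
        rw [hNm]
        simp only [Matrix.of_apply]
        calc ∑ l, ∑ m', (Km (pr.1, l) (pr.2, m') * uhat l) * uhat m'
            = ∑ l, ∑ m', Km (pr.1, l) (pr.2, m') * (uhat l * uhat m') :=
              Finset.sum_congr rfl fun l _ => Finset.sum_congr rfl fun m' _ => by ring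
          _ = ∑ t : Fin M × Fin M, Km (pr.1, t.1) (pr.2, t.2) * (uhat t.1 * uhat t.2) :=
              (Fintype.sum_prod_type (f := fun t : Fin M × Fin M =>
                Km (pr.1, t.1) (pr.2, t.2) * (uhat t.1 * uhat t.2))).symm)
    rwa [hker2, hprodsq uhat uhat, hxu, hσΩΩv] at h
  -- total bound on RRm
  have hRRb : frobNorm RRm ≤ σΩΩ2 * frobNorm Sm + σθθ2 + 2 * σΩθ2 * euclNorm mv
      + 2 * (σΩΩ2 * (euclNorm uhat * euclNorm mv)) + 2 * σΩθ2 * euclNorm uhat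
      + σΩΩ2 * (euclNorm uhat * euclNorm uhat) := by
    have s1 := L4Aux.frobNorm_add_le (Qm - U1m + U2m - U1bm + Θmm - Lm + U2bm - Lbm) Nm
    have s2 := L4Aux.frobNorm_sub_le (Qm - U1m + U2m - U1bm + Θmm - Lm + U2bm) Lbm
    have s3 := L4Aux.frobNorm_add_le (Qm - U1m + U2m - U1bm + Θmm - Lm) U2bm
    have s4 := L4Aux.frobNorm_sub_le (Qm - U1m + U2m - U1bm + Θmm) Lm
    have s5 := L4Aux.frobNorm_add_le (Qm - U1m + U2m - U1bm) Θmm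
    have s6 := L4Aux.frobNorm_sub_le (Qm - U1m + U2m) U1bm
    have s7 := L4Aux.frobNorm_add_le (Qm - U1m) U2m
    have s8 := L4Aux.frobNorm_sub_le Qm U1m
    rw [hRRm]
    have hU2symm : euclNorm uhat * euclNorm mv = euclNorm mv * euclNorm uhat := by ring
    rw [hσθθv] at *
    linarith [hQb, hU1b', hU1bb, hU2b', hU2bb, hLb', hLbb, hNb]
  -- final assembly
  have hmB : euclNorm mv ≤ euclNorm (Evec P (e 0)) := by
    rw [hmvdef]; exact hm0 (k - 1)
  have hA1 : frobNorm ((1 - μ k • (Ψm * A)) * Sm * (1 - μ k • (Ψm * A))ᵀ)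
      ≤ (1 - μ k * lam) ^ 2 * frobNorm Sm := by
    refine (L4Aux.frobNorm_sandwich_op _ _).trans ?_
    have h2 : l2OpNorm (1 - μ k • (Ψm * A)) ≤ 1 - μ k * lam := hcontr k hk
    have h3 := pow_le_pow_left₀ (L4Aux.l2OpNorm_nonneg (1 - μ k • (Ψm * A))) h2 2
    exact mul_le_mul_of_nonneg_right h3 (L4Aux.frobNorm_nonneg _)
  have hA2 : frobNorm (Ψm * RRm * Ψmᵀ) ≤ frobNorm Ψm ^ 2 * frobNorm RRm :=
    L4Aux.frobNorm_sandwich_frob _ _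
  have hd0 : (0:ℝ) ≤ frobNorm Ψm := L4Aux.frobNorm_nonneg _
  have hu0 : (0:ℝ) ≤ euclNorm uhat := L4Aux.euclNorm_nonneg _
  have hmv0 : (0:ℝ) ≤ euclNorm mv := L4Aux.euclNorm_nonneg _
  have hstep : frobNorm (Emat P (fun ω => vecMulVec (e k ω) (e k ω)))
      ≤ (1 - μ k * lam) ^ 2 * frobNorm Sm
        + (μ k) ^ 2 * (frobNorm Ψm ^ 2 * frobNorm RRm) := by
    rw [hEmat]
    refine (L4Aux.frobNorm_add_le _ _).trans ?_
    have h1 : frobNorm (((μ k) ^ 2) • (Ψm * RRm * Ψmᵀ))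
        = (μ k) ^ 2 * frobNorm (Ψm * RRm * Ψmᵀ) := by
      rw [L4Aux.frobNorm_smul, abs_of_nonneg (sq_nonneg _)]
    rw [h1]
    have h2 := mul_le_mul_of_nonneg_left hA2 (sq_nonneg (μ k))
    linarith [hA1]
  refine hstep.trans ?_
  have hRR0 := mul_le_mul_of_nonneg_left hRRb
    (mul_nonneg (sq_nonneg (μ k)) (sq_nonneg (frobNorm Ψm)))
  have hS0 : (0:ℝ) ≤ frobNorm Sm := L4Aux.frobNorm_nonneg _
  have hsub : (0:ℝ) ≤ euclNorm (Evec P (e 0)) - euclNorm mv := sub_nonneg.2 hmB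
  nlinarith [mul_nonneg (mul_nonneg (mul_nonneg (sq_nonneg (μ k)) (sq_nonneg (frobNorm Ψm))) hσΩθ0) hsub,
    mul_nonneg (mul_nonneg (mul_nonneg (mul_nonneg (sq_nonneg (μ k)) (sq_nonneg (frobNorm Ψm))) hσΩΩ0) hu0) hsub]
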